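/- arXiv:1706.05397 — 7 statements merged into one kernel-verified Lean document; each statement's English description precedes it below -/
import Mathlib

section
/- Let β > 0 and for each real λ > 0 let s_λ be a positive integer with s_λ > λ such that √(s_λ)·(1 − λ/s_λ) → β as λ → ∞. Then P(Pois(λ) < s_λ) → Φ(β) as λ → ∞, where Pois(λ) is a Poisson random variable with mean λ. -/
open Filter MeasureTheory

/-- Standard normal probability density function. -/
noncomputable def stdGaussianPDF (x : ℝ) : ℝ :=
  Real.exp (-x ^ 2 / 2) / Real.sqrt (2 * Real.pi)

/-- Standard normal cumulative distribution function. -/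
noncomputable def stdGaussianCDF (x : ℝ) : ℝ :=
  ∫ t in Set.Iic x, stdGaussianPDF t

open Set Topology

lemma myIntegrable_pow_exp (n : ℕ) {a : ℝ} (ha : 0 ≤ a) :
    IntegrableOn (fun t : ℝ => t ^ n * Real.exp (-t)) (Set.Ioi a) := by
  have h := Real.GammaIntegral_convergent (s := (n : ℝ) + 1) (by positivity)
  have h2 : IntegrableOn (fun t : ℝ => t ^ n * Real.exp (-t)) (Set.Ioi 0) := by
    refine h.congr_fun (fun x hx => ?_) measurableSet_Ioi
    beta_reduce; rw [add_sub_cancel_right, Real.rpow_natCast, mul_comm]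
  exact h2.mono_set (Set.Ioi_subset_Ioi ha)

lemma myTail_integral_eq (n : ℕ) {a : ℝ} (ha : 0 ≤ a) :
    ∫ t in Set.Ioi a, t ^ n * Real.exp (-t)
      = (n.factorial : ℝ) * ∑ k ∈ Finset.range (n + 1),
          Real.exp (-a) * a ^ k / (k.factorial : ℝ) := by
  induction n with
  | zero => simp [integral_exp_neg_Ioi, integral_exp_Iic]
  | succ n ih =>
    have key : ∫ t in Set.Ioi a,
        (t ^ (n + 1) * Real.exp (-t) - ((n : ℝ) + 1) * (t ^ n * Real.exp (-t)))
        = 0 - (-(a ^ (n + 1) * Real.exp (-a))) := by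
      apply integral_Ioi_of_hasDerivAt_of_tendsto'
        (f := fun t : ℝ => -(t ^ (n + 1) * Real.exp (-t)))
      · intro x _
        have h1 : HasDerivAt (fun t : ℝ => t ^ (n + 1)) (((n : ℝ) + 1) * x ^ n) x := by
          simpa using hasDerivAt_pow (n + 1) x
        have h2 : HasDerivAt (fun t : ℝ => Real.exp (-t)) (-Real.exp (-x)) x := by
          simpa using (hasDerivAt_neg x).exp
        have h3 := (h1.fun_mul h2).fun_neg
        convert h3 using 1
        ring
      · exact (myIntegrable_pow_exp (n + 1) ha).sub
          ((myIntegrable_pow_exp n ha).const_mul _)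
      · have := (Real.tendsto_pow_mul_exp_neg_atTop_nhds_zero (n + 1)).neg
        simpa using this
    have hint1 := myIntegrable_pow_exp (n + 1) ha
    have hint2 := (myIntegrable_pow_exp n ha).const_mul ((n : ℝ) + 1)
    rw [integral_sub hint1 hint2, integral_const_mul, ih] at key
    have key2 : ∫ t in Set.Ioi a, t ^ (n + 1) * Real.exp (-t)
        = a ^ (n + 1) * Real.exp (-a)
          + ((n : ℝ) + 1) * ((n.factorial : ℝ) * ∑ k ∈ Finset.range (n + 1),
              Real.exp (-a) * a ^ k / (k.factorial : ℝ)) := by linarith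
    rw [key2]
    have h0 : ((n + 1).factorial : ℝ) = ((n : ℝ) + 1) * (n.factorial : ℝ) := by
      push_cast [Nat.factorial_succ]; ring
    have hne : ((n : ℝ) + 1) * (n.factorial : ℝ) ≠ 0 := by positivity
    rw [Finset.sum_range_succ _ (n + 1), h0]
    field_simp
    ring

lemma myIntegral_comp_add_right_Ioi (g : ℝ → ℝ) (a c : ℝ) :
    ∫ x in Set.Ioi a, g (x + c) = ∫ x in Set.Ioi (a + c), g x := by
  rw [← integral_indicator measurableSet_Ioi, ← integral_indicator measurableSet_Ioi,
    ← integral_add_right_eq_self (fun x => (Set.Ioi (a + c)).indicator g x) c]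
  congr 1
  ext x
  simp only [Set.indicator_apply, Set.mem_Ioi, add_lt_add_iff_right]

noncomputable def pf (m : ℕ) (x : ℝ) : ℝ :=
  Real.sqrt m / (m.factorial : ℝ)
    * ((Real.sqrt m * x + m) ^ m * Real.exp (-(Real.sqrt m * x + m)))

lemma mySubst (m : ℕ) (hm : 1 ≤ m) (lam : ℝ) :
    (∫ t in Set.Ioi lam, t ^ m * Real.exp (-t)) / (m.factorial : ℝ)
      = ∫ x in Set.Ioi ((lam - m) / Real.sqrt m), pf m x := by
  have hs : (0 : ℝ) < Real.sqrt m := Real.sqrt_pos.2 (by exact_mod_cast hm)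
  have h1 := integral_comp_mul_left_Ioi
    (fun y => (y + m) ^ m * Real.exp (-(y + m))) ((lam - m) / Real.sqrt m) hs
  rw [mul_div_cancel₀ _ hs.ne'] at h1
  have h2 := myIntegral_comp_add_right_Ioi (fun t => t ^ m * Real.exp (-t)) (lam - m) m
  rw [sub_add_cancel] at h2
  simp only [pf, mul_assoc]
  rw [MeasureTheory.integral_const_mul]
  rw [show (fun x : ℝ => (Real.sqrt ↑m * x + ↑m) ^ m * Real.exp (-(Real.sqrt ↑m * x + ↑m)))
      = fun x : ℝ => (fun y => (y + ↑m) ^ m * Real.exp (-(y + ↑m))) (Real.sqrt ↑m * x) from rfl]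
  rw [h1, smul_eq_mul, h2, div_mul_eq_mul_div, div_eq_div_iff (by positivity) (by positivity)]
  ring_nf
  rw [mul_inv_cancel_right₀ hs.ne']

noncomputable def cst (m : ℕ) : ℝ :=
  Real.sqrt m * (m : ℝ) ^ m * Real.exp (-(m : ℝ)) / (m.factorial : ℝ)

lemma cst_eq (m : ℕ) (hm : 1 ≤ m) :
    cst m = (Real.sqrt 2 * Stirling.stirlingSeq m)⁻¹ := by
  have hm0 : (0 : ℝ) < m := by exact_mod_cast hm
  have h1 : Real.sqrt (2 * m) = Real.sqrt 2 * Real.sqrt m :=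
    Real.sqrt_mul (by norm_num) _
  have h2 : ((m : ℝ) / Real.exp 1) ^ m = (m : ℝ) ^ m * Real.exp (-(m : ℝ)) := by
    rw [div_pow, Real.exp_one_pow, Real.exp_neg, div_eq_mul_inv]
  rw [Stirling.stirlingSeq, h1, h2, cst]
  have hsm : (0 : ℝ) < Real.sqrt m := Real.sqrt_pos.2 hm0
  have hfac : (0 : ℝ) < (m.factorial : ℝ) := by positivity
  have hpow : (0 : ℝ) < (m : ℝ) ^ m := by positivity
  have hexp : (0 : ℝ) < Real.exp (-(m : ℝ)) := Real.exp_pos _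
  field_simp

lemma tendsto_cst : Tendsto cst atTop (𝓝 (Real.sqrt (2 * Real.pi))⁻¹) := by
  have h := (Stirling.tendsto_stirlingSeq_sqrt_pi.const_mul (Real.sqrt 2)).inv₀
    (by positivity)
  rw [← Real.sqrt_mul (by norm_num) Real.pi] at h
  apply h.congr'
  filter_upwards [eventually_ge_atTop 1] with m hm
  exact (cst_eq m hm).symm

lemma myTendsto_sqrt : Tendsto Real.sqrt atTop atTop := by
  rw [tendsto_atTop]
  intro b
  filter_upwards [eventually_ge_atTop ((max 0 b) ^ 2)] with x hx
  calc b ≤ max 0 b := le_max_right _ _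
    _ = Real.sqrt ((max 0 b) ^ 2) := (Real.sqrt_sq (le_max_left _ _)).symm
    _ ≤ Real.sqrt x := Real.sqrt_le_sqrt hx

lemma sqrt_nat_tendsto : Tendsto (fun m : ℕ => Real.sqrt m) atTop atTop :=
  myTendsto_sqrt.comp tendsto_natCast_atTop_atTop

lemma tendsto_exponent (x : ℝ) :
    Tendsto (fun m : ℕ => (m : ℝ) * Real.log (1 + x / Real.sqrt m) - Real.sqrt m * x)
      atTop (𝓝 (-x ^ 2 / 2)) := by
  have hsq := sqrt_nat_tendsto
  have hE : Tendsto (fun m : ℕ => (m : ℝ) *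
      (Real.log (1 + x / Real.sqrt m) - x / Real.sqrt m + (x / Real.sqrt m) ^ 2 / 2))
      atTop (𝓝 0) := by
    have hg : Tendsto (fun m : ℕ => 2 * |x| ^ 3 / Real.sqrt m) atTop (𝓝 0) :=
      Tendsto.div_atTop tendsto_const_nhds hsq
    apply squeeze_zero_norm' _ hg
    filter_upwards [hsq.eventually_ge_atTop (max 1 (2 * |x|)), eventually_ge_atTop 1]
      with m hsm hm1
    set t := Real.sqrt (m : ℝ) with ht
    have ht1 : (1 : ℝ) ≤ t := le_trans (le_max_left _ _) hsm
    have htx : 2 * |x| ≤ t := le_trans (le_max_right _ _) hsm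
    have ht0 : (0 : ℝ) < t := by linarith
    have hmt : (m : ℝ) = t ^ 2 := by
      rw [ht, Real.sq_sqrt (by positivity)]
    have huabs : |x| / t ≤ 1 / 2 := by
      rw [div_le_iff₀ ht0]; linarith
    have hu1 : |(-(x / t))| < 1 := by
      rw [abs_neg, abs_div, abs_of_pos ht0]
      calc |x| / t ≤ 1 / 2 := huabs
        _ < 1 := by norm_num
    have h2 := Real.abs_log_sub_add_sum_range_le hu1 2
    have hsum : (∑ i ∈ Finset.range 2, (-(x / t)) ^ (i + 1) / (i + 1))
        = -(x / t) + (x / t) ^ 2 / 2 := by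
      simp [Finset.sum_range_succ]
      ring
    rw [hsum] at h2
    have habs : |(-(x / t))| = |x| / t := by
      rw [abs_neg, abs_div, abs_of_pos ht0]
    rw [habs] at h2
    have hlog : Real.log (1 - -(x / t)) = Real.log (1 + x / t) := by ring_nf
    rw [hlog] at h2
    have hinner : Real.log (1 + x / t) - x / t + (x / t) ^ 2 / 2
        = -(x / t) + (x / t) ^ 2 / 2 + Real.log (1 + x / t) := by ring
    rw [Real.norm_eq_abs, abs_mul, hinner, Nat.abs_cast]
    have hb : (|x| / t) ^ 3 / (1 - |x| / t) ≤ 2 * (|x| / t) ^ 3 := by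
      rw [div_le_iff₀ (by linarith)]
      have h3 : (0 : ℝ) ≤ (|x| / t) ^ 3 := by positivity
      nlinarith
    calc (m : ℝ) * |(-(x / t) + (x / t) ^ 2 / 2 + Real.log (1 + x / t))|
        ≤ (m : ℝ) * ((|x| / t) ^ 3 / (1 - |x| / t)) := by
          apply mul_le_mul_of_nonneg_left h2 (by positivity)
      _ ≤ (m : ℝ) * (2 * (|x| / t) ^ 3) := by
          apply mul_le_mul_of_nonneg_left hb (by positivity)
      _ = 2 * |x| ^ 3 / t := by
          rw [hmt]; field_simp
  have heq : ∀ᶠ m : ℕ in atTop,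
      (m : ℝ) * (Real.log (1 + x / Real.sqrt m) - x / Real.sqrt m + (x / Real.sqrt m) ^ 2 / 2)
        - x ^ 2 / 2
      = (m : ℝ) * Real.log (1 + x / Real.sqrt m) - Real.sqrt m * x := by
    filter_upwards [eventually_ge_atTop 1] with m hm1
    have hm0 : (0 : ℝ) < m := by exact_mod_cast hm1
    have hs0 : (0 : ℝ) < Real.sqrt m := Real.sqrt_pos.2 hm0
    have h1 : (m : ℝ) * (x / Real.sqrt m) = Real.sqrt m * x := by
      rw [(Real.mul_self_sqrt hm0.le).symm]
      field_simp
      rw [Real.sq_sqrt hm0.le, Real.sq_sqrt hm0.le]; ring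
    have h2 : (m : ℝ) * (x / Real.sqrt m) ^ 2 = x ^ 2 := by
      rw [div_pow, Real.sq_sqrt hm0.le]
      field_simp
    linear_combination -h1 + h2 / 2
  have := (hE.sub_const (x ^ 2 / 2)).congr' heq
  simpa [neg_div] using this

lemma mul_div_sqrt (m : ℕ) (hm : 1 ≤ m) (x : ℝ) :
    (m : ℝ) * (x / Real.sqrt m) = Real.sqrt m * x := by
  have hm0 : (0 : ℝ) < m := by exact_mod_cast hm
  rw [(Real.mul_self_sqrt hm0.le).symm]
  field_simp
  rw [Real.sq_sqrt hm0.le, Real.sq_sqrt hm0.le]; ring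

lemma one_add_pos (m : ℕ) (hm : 1 ≤ m) (x : ℝ) (h : 0 < Real.sqrt m * x + m) :
    0 < 1 + x / Real.sqrt m := by
  have hm0 : (0 : ℝ) < m := by exact_mod_cast hm
  have hkey : Real.sqrt m * x + m = (m : ℝ) * (1 + x / Real.sqrt m) := by
    rw [mul_add, mul_one, mul_div_sqrt m hm x]; ring
  rw [hkey] at h
  nlinarith

lemma pf_eq (m : ℕ) (hm : 1 ≤ m) (x : ℝ) (h : 0 < Real.sqrt m * x + m) :
    pf m x = cst m
      * Real.exp ((m : ℝ) * Real.log (1 + x / Real.sqrt m) - Real.sqrt m * x) := by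
  have hm0 : (0 : ℝ) < m := by exact_mod_cast hm
  have hkey : Real.sqrt m * x + (m : ℝ) = (m : ℝ) * (1 + x / Real.sqrt m) := by
    rw [mul_add, mul_one, mul_div_sqrt m hm x]; ring
  have hu0 : 0 < 1 + x / Real.sqrt m := one_add_pos m hm x h
  rw [pf, cst, hkey, mul_pow, ← Real.exp_log (pow_pos hu0 m), Real.log_pow]
  have he : Real.exp (-((m : ℝ) * (1 + x / Real.sqrt m)))
      = Real.exp (-(m : ℝ)) * Real.exp (-(Real.sqrt m * x)) := by
    rw [← Real.exp_add]
    congr 1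
    linarith [hkey]
  rw [he, Real.exp_sub, Real.exp_neg (Real.sqrt m * x)]
  push_cast
  ring

lemma tendsto_pf (x : ℝ) :
    Tendsto (fun m : ℕ => pf m x) atTop
      (𝓝 ((Real.sqrt (2 * Real.pi))⁻¹ * Real.exp (-x ^ 2 / 2))) := by
  have h1 := tendsto_cst.mul ((Real.continuous_exp.tendsto _).comp (tendsto_exponent x))
  apply h1.congr'
  filter_upwards [sqrt_nat_tendsto.eventually_gt_atTop |x|, eventually_ge_atTop 1]
    with m hsm hm1
  have hs0 : 0 < Real.sqrt (m : ℝ) := lt_of_le_of_lt (abs_nonneg x) hsm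
  have h : 0 < Real.sqrt m * x + m := by
    have hm0 : (0 : ℝ) < m := by exact_mod_cast hm1
    have h2 : (m : ℝ) = Real.sqrt m * Real.sqrt m := (Real.mul_self_sqrt hm0.le).symm
    nlinarith [neg_abs_le x]
  exact (pf_eq m hm1 x h).symm

lemma log_ineq {u : ℝ} (hu : 0 ≤ u) :
    Real.log (1 + u) ≤ u - u ^ 2 / (2 * (1 + u)) := by
  have h1 : (0 : ℝ) < 1 + u := by linarith
  have h2 : Real.log (1 + u) ≤ Real.sinh (Real.log (1 + u)) :=
    Real.self_le_sinh_iff.mpr (Real.log_nonneg (by linarith))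
  rw [Real.sinh_log h1] at h2
  have h3 : (1 + u - (1 + u)⁻¹) / 2 = u - u ^ 2 / (2 * (1 + u)) := by
    field_simp
    ring
  linarith

lemma pf_bound (m : ℕ) (hm : 1 ≤ m) (hc : cst m ≤ 1) (x : ℝ)
    (h : 0 < Real.sqrt m * x + m) :
    pf m x ≤ Real.exp (1 / 4) * Real.exp (-x / 4) := by
  rw [pf_eq m hm x h, ← Real.exp_add]
  have hm0 : (0 : ℝ) < m := by exact_mod_cast hm
  have hs1 : (1 : ℝ) ≤ Real.sqrt m := by
    rw [show (1 : ℝ) = Real.sqrt 1 from Real.sqrt_one.symm]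
    exact Real.sqrt_le_sqrt (by exact_mod_cast hm)
  have hu0 : 0 < 1 + x / Real.sqrt m := one_add_pos m hm x h
  have hmu : (m : ℝ) * (x / Real.sqrt m) = Real.sqrt m * x := mul_div_sqrt m hm x
  have hexp_le : (m : ℝ) * Real.log (1 + x / Real.sqrt m) - Real.sqrt m * x
      ≤ 1 / 4 + -x / 4 := by
    rcases le_or_gt x 0 with hx | hx
    · have hlog : Real.log (1 + x / Real.sqrt m) ≤ x / Real.sqrt m := by
        have := Real.log_le_sub_one_of_pos hu0
        linarith
      have hmul := mul_le_mul_of_nonneg_left hlog hm0.le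
      linarith
    · have hupos : 0 ≤ x / Real.sqrt m := by positivity
      have hlog := log_ineq hupos
      have hmul := mul_le_mul_of_nonneg_left hlog hm0.le
      have hmu2 : (m : ℝ) * (x / Real.sqrt m) ^ 2 = x ^ 2 := by
        rw [div_pow, Real.sq_sqrt hm0.le]
        field_simp
      have hux : x / Real.sqrt m ≤ x := div_le_self hx.le hs1
      have hdist : (m : ℝ) * ((x / Real.sqrt m) - (x / Real.sqrt m) ^ 2
          / (2 * (1 + x / Real.sqrt m)))
          = Real.sqrt m * x - x ^ 2 / (2 * (1 + x / Real.sqrt m)) := by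
        rw [mul_sub, hmu, mul_div_assoc']
        rw [hmu2]
      have hcmp : x ^ 2 / (2 * (1 + x)) ≤ x ^ 2 / (2 * (1 + x / Real.sqrt m)) := by
        apply div_le_div_of_nonneg_left (sq_nonneg x) (by positivity)
        nlinarith
      have hfinal : -(x ^ 2 / (2 * (1 + x))) ≤ 1 / 4 + -x / 4 := by
        have h2x : (0 : ℝ) < 2 * (1 + x) := by positivity
        have hd := div_mul_cancel₀ (x ^ 2) h2x.ne'
        nlinarith [hd, hx, h2x, sq_nonneg x]
      nlinarith [hmul, hdist, hcmp, hfinal]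
  calc cst m * Real.exp ((m : ℝ) * Real.log (1 + x / Real.sqrt m) - Real.sqrt m * x)
      ≤ Real.exp ((m : ℝ) * Real.log (1 + x / Real.sqrt m) - Real.sqrt m * x) :=
        mul_le_of_le_one_left (Real.exp_pos _).le hc
    _ ≤ Real.exp (1 / 4 + -x / 4) := Real.exp_le_exp.mpr hexp_le

lemma pf_continuous (m : ℕ) : Continuous (pf m) := by
  unfold pf
  fun_prop

lemma pf_nonneg (m : ℕ) (x : ℝ) (h : 0 ≤ Real.sqrt m * x + m) : 0 ≤ pf m x := by
  rw [pf]
  have h1 : (0 : ℝ) ≤ Real.sqrt m / (m.factorial : ℝ) := by positivity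
  exact mul_nonneg h1 (mul_nonneg (pow_nonneg h m) (Real.exp_pos _).le)

lemma hlimit_int (β : ℝ) :
    ∫ x, (Set.Ioi (-β)).indicator stdGaussianPDF x = stdGaussianCDF β := by
  rw [integral_indicator measurableSet_Ioi]
  have h1 : ∀ x : ℝ, stdGaussianPDF (-x) = stdGaussianPDF x := by
    intro x; simp [stdGaussianPDF]
  calc ∫ x in Set.Ioi (-β), stdGaussianPDF x
      = ∫ x in Set.Ioi (-β), stdGaussianPDF (-x) := by simp_rw [h1]
    _ = ∫ x in Set.Iic β, stdGaussianPDF x := by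
        rw [integral_comp_neg_Ioi]; norm_num
    _ = stdGaussianCDF β := rfl

theorem poisson_cdf_tendsto_gaussianCDF (β : ℝ) (hβ : 0 < β) (s : ℝ → ℕ)
    (hs : ∀ lam : ℝ, 0 < lam → 0 < s lam ∧ lam < s lam)
    (hscale : Tendsto (fun lam : ℝ => Real.sqrt (s lam) * (1 - lam / (s lam : ℝ)))
      atTop (nhds β)) :
    Tendsto (fun lam : ℝ => ∑ k ∈ Finset.range (s lam),
        Real.exp (-lam) * lam ^ k / (k.factorial : ℝ))
      atTop (nhds (stdGaussianCDF β)) := by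
  -- basic eventual facts
  have hσ_gt : ∀ᶠ lam : ℝ in atTop, lam < ((s lam : ℕ) : ℝ) := by
    filter_upwards [eventually_gt_atTop 0] with lam hl
    exact (hs lam hl).2
  have hσ : Tendsto (fun lam : ℝ => ((s lam : ℕ) : ℝ)) atTop atTop :=
    tendsto_atTop_mono' atTop (hσ_gt.mono fun lam h => h.le) tendsto_id
  have hs2 : ∀ᶠ lam : ℝ in atTop, 2 ≤ s lam := by
    filter_upwards [hσ.eventually_ge_atTop 2] with lam hl
    exact_mod_cast hl
  have hcast : ∀ᶠ lam : ℝ in atTop, ((s lam - 1 : ℕ) : ℝ) = ((s lam : ℕ) : ℝ) - 1 := by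
    filter_upwards [hs2] with lam hl
    have : 1 ≤ s lam := by omega
    push_cast [Nat.cast_sub this]
    ring
  have htail : Tendsto (fun lam : ℝ => ((s lam : ℕ) : ℝ) - 1) atTop atTop :=
    tendsto_atTop_add_const_right _ _ hσ
  have hm_nat : Tendsto (fun lam : ℝ => s lam - 1) atTop atTop := by
    rw [← tendsto_natCast_atTop_iff (R := ℝ)]
    exact htail.congr' (hcast.mono fun lam h => h.symm)
  -- limit of the lower endpoint
  have hx0 : Tendsto
      (fun lam : ℝ => (lam - ((s lam - 1 : ℕ) : ℝ)) / Real.sqrt ((s lam - 1 : ℕ) : ℝ))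
      atTop (𝓝 (-β)) := by
    have h1 : Tendsto (fun lam : ℝ => (((s lam : ℕ) : ℝ) - lam) / Real.sqrt (s lam))
        atTop (𝓝 β) := by
      apply hscale.congr'
      filter_upwards [eventually_gt_atTop 0] with lam hl
      have h0 : (0 : ℝ) < ((s lam : ℕ) : ℝ) := by exact_mod_cast (hs lam hl).1
      have hsq : (0 : ℝ) < Real.sqrt ((s lam : ℕ) : ℝ) := Real.sqrt_pos.2 h0
      rw [eq_div_iff hsq.ne']
      rw [show Real.sqrt ((s lam : ℕ) : ℝ) * (1 - lam / ((s lam : ℕ) : ℝ))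
            * Real.sqrt ((s lam : ℕ) : ℝ)
          = (Real.sqrt ((s lam : ℕ) : ℝ) * Real.sqrt ((s lam : ℕ) : ℝ))
            * (1 - lam / ((s lam : ℕ) : ℝ)) by ring,
        Real.mul_self_sqrt h0.le, mul_sub, mul_one, mul_div_cancel₀ _ h0.ne']
    have ha : Tendsto (fun lam : ℝ => ((s lam : ℕ) : ℝ) / (((s lam : ℕ) : ℝ) - 1))
        atTop (𝓝 1) := by
      have h2 : Tendsto (fun lam : ℝ => 1 + (((s lam : ℕ) : ℝ) - 1)⁻¹) atTop (𝓝 (1 + 0)) :=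
        tendsto_const_nhds.add htail.inv_tendsto_atTop
      rw [add_zero] at h2
      apply h2.congr'
      filter_upwards [htail.eventually_ge_atTop 1] with lam hl
      field_simp
      ring
    have h2 : Tendsto (fun lam : ℝ =>
        Real.sqrt ((s lam : ℕ) : ℝ) / Real.sqrt (((s lam : ℕ) : ℝ) - 1)) atTop (𝓝 1) := by
      have h3 := (Real.continuous_sqrt.tendsto 1).comp ha
      rw [Real.sqrt_one] at h3
      apply h3.congr'
      filter_upwards [hσ.eventually_ge_atTop 0] with lam hl
      exact Real.sqrt_div hl _
    have h3 : Tendsto (fun lam : ℝ => (Real.sqrt (((s lam : ℕ) : ℝ) - 1))⁻¹)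
        atTop (𝓝 0) := (myTendsto_sqrt.comp htail).inv_tendsto_atTop
    have hcomb := ((h1.mul h2).neg).add h3
    rw [show -(β * 1) + 0 = -β by ring] at hcomb
    apply hcomb.congr'
    filter_upwards [htail.eventually_ge_atTop 1, eventually_gt_atTop 0, hcast]
      with lam hl hl0 hc
    have h0 : (0 : ℝ) < ((s lam : ℕ) : ℝ) := by exact_mod_cast (hs lam hl0).1
    have hsq : (0 : ℝ) < Real.sqrt ((s lam : ℕ) : ℝ) := Real.sqrt_pos.2 h0
    have hsq1 : (0 : ℝ) < Real.sqrt (((s lam : ℕ) : ℝ) - 1) :=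
      Real.sqrt_pos.2 (by linarith)
    rw [hc]
    field_simp
    ring
  -- the main eventual identity
  have hmain : ∀ᶠ lam : ℝ in atTop,
      ∑ k ∈ Finset.range (s lam), Real.exp (-lam) * lam ^ k / (k.factorial : ℝ)
      = ∫ x, (Set.Ioi ((lam - ((s lam - 1 : ℕ) : ℝ)) / Real.sqrt ((s lam - 1 : ℕ) : ℝ))).indicator
          (pf (s lam - 1)) x := by
    filter_upwards [eventually_gt_atTop 0, hs2] with lam hl0 hl2
    have hm1 : 1 ≤ s lam - 1 := by omega
    have hsm : s lam = (s lam - 1) + 1 := by omega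
    have hfac : ((s lam - 1).factorial : ℝ) ≠ 0 := by positivity
    rw [show Finset.range (s lam) = Finset.range ((s lam - 1) + 1) from by rw [← hsm]]
    rw [show ∑ k ∈ Finset.range (s lam - 1 + 1), Real.exp (-lam) * lam ^ k / (k.factorial : ℝ)
        = (∫ t in Set.Ioi lam, t ^ (s lam - 1) * Real.exp (-t)) / ((s lam - 1).factorial : ℝ) by
      rw [myTail_integral_eq (s lam - 1) hl0.le]
      rw [mul_div_cancel_left₀ _ hfac]]
    rw [mySubst (s lam - 1) hm1 lam, ← integral_indicator measurableSet_Ioi]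
  -- dominated convergence
  have hcst_ev : ∀ᶠ m : ℕ in atTop, cst m ≤ 1 := by
    have h2π : (1 : ℝ) < Real.sqrt (2 * Real.pi) := by
      rw [show (1 : ℝ) = Real.sqrt 1 from Real.sqrt_one.symm]
      exact Real.sqrt_lt_sqrt (by norm_num) (by nlinarith [Real.pi_gt_three])
    have hlt : (Real.sqrt (2 * Real.pi))⁻¹ < 1 := by
      rw [inv_lt_one_iff₀]
      right; exact h2π
    exact tendsto_cst.eventually (eventually_le_nhds hlt)
  have hae : ∀ᵐ x : ℝ, x ≠ -β := by
    have h0 : (volume : Measure ℝ) {-β} = 0 := measure_singleton _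
    rw [ae_iff]
    simpa only [ne_eq, not_not, Set.setOf_eq_eq_singleton] using h0
  have hDC := MeasureTheory.tendsto_integral_filter_of_dominated_convergence
    (μ := (volume : Measure ℝ)) (l := (atTop : Filter ℝ))
    (F := fun lam x =>
      (Set.Ioi ((lam - ((s lam - 1 : ℕ) : ℝ)) / Real.sqrt ((s lam - 1 : ℕ) : ℝ))).indicator
        (pf (s lam - 1)) x)
    (f := (Set.Ioi (-β)).indicator stdGaussianPDF)
    ((Set.Ici (-β - 1)).indicator fun x => Real.exp (1 / 4) * Real.exp (-x / 4))
    (by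
      apply Filter.Eventually.of_forall
      intro lam
      exact ((pf_continuous (s lam - 1)).aestronglyMeasurable).indicator measurableSet_Ioi)
    (by
      filter_upwards [eventually_gt_atTop 0, hs2, hm_nat.eventually hcst_ev,
        hx0.eventually_const_lt (show -β - 1 < -β by linarith)] with lam hl0 hl2 hcst hx0b
      apply Filter.Eventually.of_forall
      intro x
      set m := s lam - 1 with hmdef
      set x0 := (lam - ((m : ℕ) : ℝ)) / Real.sqrt ((m : ℕ) : ℝ) with hx0def
      have hm1 : 1 ≤ m := by omega
      have hm0 : (0 : ℝ) < (m : ℝ) := by exact_mod_cast hm1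
      have hsqm : (0 : ℝ) < Real.sqrt (m : ℝ) := Real.sqrt_pos.2 hm0
      by_cases hmem : x0 < x
      · rw [Set.indicator_of_mem (Set.mem_Ioi.2 hmem)]
        have hlam : Real.sqrt (m : ℝ) * x0 + (m : ℝ) = lam := by
          rw [hx0def, mul_div_cancel₀ _ hsqm.ne']
          ring
        have harg : 0 < Real.sqrt (m : ℝ) * x + (m : ℝ) := by
          have := mul_lt_mul_of_pos_left hmem hsqm
          linarith
        have hnn := pf_nonneg m x harg.le
        rw [Real.norm_eq_abs, abs_of_nonneg hnn]
        have hb := pf_bound m hm1 hcst x harg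
        have hxmem : x ∈ Set.Ici (-β - 1) := by
          have : -β - 1 < x0 := hx0b
          exact Set.mem_Ici.2 (by linarith)
        rw [Set.indicator_of_mem hxmem]
        exact hb
      · rw [Set.indicator_of_notMem (by simpa using hmem)]
        simp only [norm_zero]
        apply Set.indicator_nonneg
        intro y _
        positivity)
    (by
      have h1 : IntegrableOn (fun x : ℝ => Real.exp (1 / 4) * Real.exp (-x / 4))
          (Set.Ici (-β - 1)) := by
        rw [integrableOn_Ici_iff_integrableOn_Ioi]
        have h2 := exp_neg_integrableOn_Ioi (-β - 1) (show (0 : ℝ) < 1 / 4 by norm_num)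
        have h3 : IntegrableOn (fun x : ℝ => Real.exp (-x / 4)) (Set.Ioi (-β - 1)) := by
          apply h2.congr_fun _ measurableSet_Ioi
          intro x _
          simp only [show -(1 / 4 : ℝ) * x = -x / 4 from by ring]
        exact h3.const_mul _
      exact h1.integrable_indicator measurableSet_Ici)
    (by
      filter_upwards [hae] with x hx
      rcases lt_or_gt_of_ne hx with hlt | hgt
      · rw [Set.indicator_of_notMem (by simpa using hlt.le.not_gt : x ∉ Set.Ioi (-β))]
        apply tendsto_const_nhds.congr'
        filter_upwards [hx0.eventually_const_lt hlt] with lam h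
        rw [Set.indicator_of_notMem (by simpa using h.le.not_gt)]
      · rw [Set.indicator_of_mem (Set.mem_Ioi.2 hgt)]
        have hpf := (tendsto_pf x).comp hm_nat
        have hval : (Real.sqrt (2 * Real.pi))⁻¹ * Real.exp (-x ^ 2 / 2)
            = stdGaussianPDF x := by
          rw [stdGaussianPDF]; ring
        rw [hval] at hpf
        apply hpf.congr'
        filter_upwards [hx0.eventually_lt_const hgt] with lam h
        exact (Set.indicator_of_mem (Set.mem_Ioi.2 h) _).symm)
  rw [hlimit_int β] at hDC
  exact hDC.congr' (hmain.mono fun lam h => h.symm)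
end

section
/- Let β > 0 and for each real λ > 0 let s_λ be a positive integer with s_λ > λ such that √(s_λ)·(1 − λ/s_λ) → β as λ → ∞. Then P(Pois(λ) = s_λ)/(1 − λ/s_λ) → φ(β)/β as λ → ∞, where Pois(λ) is a Poisson random variable with mean λ. -/
open Filter

theorem poisson_pmf_div_tendsto (β : ℝ) (hβ : 0 < β) (s : ℝ → ℕ)
    (hs : ∀ lam : ℝ, 0 < lam → 0 < s lam ∧ lam < s lam)
    (hscale : Tendsto (fun lam : ℝ => Real.sqrt (s lam) * (1 - lam / (s lam : ℝ)))
      atTop (nhds β)) :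
    Tendsto (fun lam : ℝ =>
        (Real.exp (-lam) * lam ^ (s lam) / ((s lam).factorial : ℝ)) / (1 - lam / (s lam : ℝ)))
      atTop (nhds (stdGaussianPDF β / β)) := by
  set d : ℝ → ℝ := fun lam => 1 - lam / (s lam : ℝ) with hd_def
  -- basic eventual facts
  have hev : ∀ᶠ lam : ℝ in atTop, 0 < lam := eventually_gt_atTop 0
  have hcast : Tendsto (fun lam : ℝ => ((s lam : ℝ))) atTop atTop := by
    refine tendsto_atTop_mono' atTop ?_ tendsto_id
    filter_upwards [hev] with lam h
    exact (hs lam h).2.le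
  have hnat : Tendsto s atTop atTop := tendsto_natCast_atTop_iff.mp hcast
  have hsqrt : Tendsto (fun lam : ℝ => Real.sqrt (s lam)) atTop atTop := by
    have := (tendsto_rpow_atTop (by norm_num : (0:ℝ) < 1/2)).comp hcast
    refine this.congr' ?_
    filter_upwards [hev] with lam h
    simp [Function.comp, Real.sqrt_eq_rpow]
  -- d → 0
  have hd0 : Tendsto d atTop (nhds 0) := by
    have := hscale.div_atTop hsqrt
    refine this.congr' ?_
    filter_upwards [hev] with lam h
    have hpos : (0:ℝ) < Real.sqrt (s lam) := by
      have := (hs lam h).1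
      positivity
    rw [mul_comm, mul_div_assoc, div_self hpos.ne', mul_one]
  -- eventual positivity of d
  have hdpos : ∀ᶠ lam : ℝ in atTop, 0 < d lam ∧ d lam < 1 := by
    filter_upwards [hev] with lam h
    obtain ⟨h1, h2⟩ := hs lam h
    have hn : (0:ℝ) < (s lam : ℝ) := by exact_mod_cast h1
    constructor
    · simp only [hd_def, sub_pos]
      exact (div_lt_one hn).mpr h2
    · simp only [hd_def, sub_lt_self_iff]
      positivity
  -- s * d ^ 2 → β ^ 2
  have hsd2 : Tendsto (fun lam : ℝ => (s lam : ℝ) * d lam ^ 2) atTop (nhds (β ^ 2)) := by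
    have := hscale.mul hscale
    rw [← sq] at this
    refine this.congr' ?_
    filter_upwards [hev] with lam h
    have : Real.sqrt (s lam) * Real.sqrt (s lam) = (s lam : ℝ) :=
      Real.mul_self_sqrt (by positivity)
    ring_nf
    rw [Real.sq_sqrt (by positivity)]
    ring
  -- the exponent tends to -β^2/2
  have harg : Tendsto (fun lam : ℝ => (s lam : ℝ) * (d lam + Real.log (1 - d lam))) atTop
      (nhds (-(β ^ 2) / 2)) := by
    have hErr : Tendsto (fun lam : ℝ =>
        (s lam : ℝ) * (d lam + d lam ^ 2 / 2 + Real.log (1 - d lam))) atTop (nhds 0) := by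
      have hbound : Tendsto (fun lam : ℝ =>
          ((s lam : ℝ) * d lam ^ 2) * (d lam / (1 - d lam))) atTop (nhds 0) := by
        have h1 : Tendsto (fun lam : ℝ => d lam / (1 - d lam)) atTop (nhds 0) := by
          have hden : Tendsto (fun lam : ℝ => 1 - d lam) atTop (nhds 1) := by
            simpa using tendsto_const_nhds.sub hd0
          have h01 := hd0.div hden one_ne_zero
          rw [zero_div] at h01
          exact h01
        have := hsd2.mul h1
        simpa using this
      apply squeeze_zero_norm' ?_ hbound
      filter_upwards [hdpos, hev] with lam ⟨h0, h1⟩ hl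
      have habs : |d lam| < 1 := by rw [abs_of_pos h0]; exact h1
      have key := Real.abs_log_sub_add_sum_range_le habs 2
      have hsum : (∑ i ∈ Finset.range 2, d lam ^ (i + 1) / (i + 1)) =
          d lam + d lam ^ 2 / 2 := by
        norm_num [Finset.sum_range_succ]
      rw [hsum] at key
      rw [abs_of_pos h0] at key
      have hn : (0:ℝ) ≤ (s lam : ℝ) := by positivity
      calc ‖(s lam : ℝ) * (d lam + d lam ^ 2 / 2 + Real.log (1 - d lam))‖
          = (s lam : ℝ) * |d lam + d lam ^ 2 / 2 + Real.log (1 - d lam)| := by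
            rw [Real.norm_eq_abs, abs_mul, abs_of_nonneg hn]
        _ ≤ (s lam : ℝ) * (d lam ^ 3 / (1 - d lam)) := by
            exact mul_le_mul_of_nonneg_left key hn
        _ = ((s lam : ℝ) * d lam ^ 2) * (d lam / (1 - d lam)) := by ring
    have := (hsd2.const_mul (-(1:ℝ)/2)).add hErr
    have h2 : (-(1:ℝ)/2) * β ^ 2 + 0 = -(β ^ 2) / 2 := by ring
    rw [h2] at this
    refine this.congr ?_
    intro lam
    ring
  have hexp : Tendsto (fun lam : ℝ =>
      Real.exp ((s lam : ℝ) * (d lam + Real.log (1 - d lam)))) atTop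
      (nhds (Real.exp (-(β ^ 2) / 2))) :=
    (Real.continuous_exp.tendsto _).comp harg
  -- Stirling
  have hstir : Tendsto (fun lam : ℝ => Stirling.stirlingSeq (s lam)) atTop
      (nhds (Real.sqrt Real.pi)) :=
    Stirling.tendsto_stirlingSeq_sqrt_pi.comp hnat
  -- √(2 s) * d → √2 * β
  have hden2 : Tendsto (fun lam : ℝ => Real.sqrt (2 * (s lam : ℝ)) * d lam) atTop
      (nhds (Real.sqrt 2 * β)) := by
    have := hscale.const_mul (Real.sqrt 2)
    refine this.congr' ?_
    filter_upwards [hev] with lam h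
    rw [Real.sqrt_mul (by norm_num : (0:ℝ) ≤ 2)]
    ring
  have hne : Real.sqrt Real.pi * (Real.sqrt 2 * β) ≠ 0 := by
    have : (0:ℝ) < Real.pi := Real.pi_pos
    positivity
  have hfinal := hexp.div (hstir.mul hden2) hne
  -- identify the limit value
  have hval : Real.exp (-(β ^ 2) / 2) / (Real.sqrt Real.pi * (Real.sqrt 2 * β)) =
      stdGaussianPDF β / β := by
    rw [stdGaussianPDF, Real.sqrt_mul (by norm_num : (0:ℝ) ≤ 2), div_div]
    ring_nf
  rw [hval] at hfinal
  -- pointwise identification of the function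
  refine hfinal.congr' ?_
  filter_upwards [hev] with lam h
  obtain ⟨h1, h2⟩ := hs lam h
  simp only [Pi.div_apply]
  have hn : (0:ℝ) < ((s lam : ℕ) : ℝ) := by exact_mod_cast h1
  have hdl : d lam = 1 - lam / ((s lam : ℕ) : ℝ) := rfl
  have h1d : 1 - d lam = lam / ((s lam : ℕ) : ℝ) := by rw [hdl]; ring
  have hdl0 : 0 < d lam := by rw [hdl, sub_pos]; exact (div_lt_one hn).mpr h2
  have hfac : ((s lam).factorial : ℝ) =
      Stirling.stirlingSeq (s lam) *
        (Real.sqrt (2 * (s lam : ℝ)) * ((s lam : ℝ) / Real.exp 1) ^ (s lam)) := by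
    rw [Stirling.stirlingSeq]
    have : Real.sqrt (2 * (s lam : ℝ)) * ((s lam : ℝ) / Real.exp 1) ^ (s lam) ≠ 0 := by
      positivity
    field_simp
  have hnd : ((s lam : ℕ) : ℝ) * d lam = ((s lam : ℕ) : ℝ) - lam := by
    rw [hdl]; field_simp
  have hlog : Real.exp (((s lam : ℕ) : ℝ) * (d lam + Real.log (1 - d lam))) =
      Real.exp (((s lam : ℕ) : ℝ) - lam) * (lam / ((s lam : ℕ) : ℝ)) ^ (s lam) := by
    rw [mul_add, hnd, Real.exp_add, Real.exp_nat_mul,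
      Real.exp_log (by rw [h1d]; positivity), h1d]
  rw [hlog, hfac]
  have hexp1 : Real.exp 1 ^ (s lam) = Real.exp ((s lam : ℕ) : ℝ) := by
    rw [← Real.exp_nat_mul, mul_one]
  have hstp : 0 < Stirling.stirlingSeq (s lam) := by
    obtain ⟨m, hm⟩ := Nat.exists_eq_succ_of_ne_zero h1.ne'
    rw [hm]
    exact Stirling.stirlingSeq'_pos m
  rw [Real.exp_sub, Real.exp_neg, div_pow, div_pow, hexp1]
  have hs2 : (0:ℝ) < Real.sqrt (2 * (s lam : ℝ)) := by positivity
  have he1 : (0:ℝ) < Real.exp lam := Real.exp_pos _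
  have he2 : (0:ℝ) < Real.exp ((s lam : ℕ) : ℝ) := Real.exp_pos _
  have hnn : (0:ℝ) < ((s lam : ℕ) : ℝ) ^ (s lam) := by positivity
  rw [← hdl]
  field_simp
end

section
/- Let β > 0 and for each real λ > 0 let s_λ be a positive integer with s_λ > λ such that √(s_λ)·(1 − λ/s_λ) → β as λ → ∞. Then √λ · B(s_λ, λ) → φ(β)/Φ(β) as λ → ∞. -/
open Filter MeasureTheory Finset

/-- The Erlang B formula (blocking probability of the `M/M/s/s` queue). -/
noncomputable def erlangB (s : ℕ) (lam : ℝ) : ℝ :=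
  (lam ^ s / s.factorial) / ∑ k ∈ Finset.range (s + 1), lam ^ k / k.factorial

noncomputable def erlA (n : ℕ) (lam : ℝ) (j : ℕ) : ℝ :=
  ∏ i ∈ Finset.range j, (((n : ℝ) - i) / lam)

lemma gauss_cast (j : ℕ) : ∑ i ∈ Finset.range j, (i : ℝ) = j * (j - 1) / 2 := by
  induction j with
  | zero => simp
  | succ m ih => rw [Finset.sum_range_succ, ih]; push_cast; ring

lemma weierstrass (s : Finset ℕ) (f : ℕ → ℝ) (h0 : ∀ i ∈ s, 0 ≤ f i)
    (h1 : ∀ i ∈ s, f i ≤ 1) : 1 - ∑ i ∈ s, f i ≤ ∏ i ∈ s, (1 - f i) := by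
  classical
  induction s using Finset.cons_induction with
  | empty => simp
  | cons a s ha ih =>
    rw [Finset.sum_cons, Finset.prod_cons]
    have h0a := h0 a (Finset.mem_cons_self a s)
    have h1a := h1 a (Finset.mem_cons_self a s)
    have ih' := ih (fun i hi => h0 i (Finset.mem_cons_of_mem hi))
      (fun i hi => h1 i (Finset.mem_cons_of_mem hi))
    have hsum : 0 ≤ ∑ i ∈ s, f i := Finset.sum_nonneg fun i hi => h0 i (Finset.mem_cons_of_mem hi)
    nlinarith

lemma prod_desc (n j : ℕ) (h : j ≤ n) :
    ∏ i ∈ Finset.range j, ((n : ℝ) - i) = (n.factorial : ℝ) / (n - j).factorial := by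
  have key := Nat.factorial_mul_descFactorial h
  have hc : ((n - j).factorial : ℝ) * (n.descFactorial j : ℝ) = n.factorial := by
    exact_mod_cast congrArg (Nat.cast : ℕ → ℝ) key
  have hprod : (n.descFactorial j : ℝ) = ∏ i ∈ Finset.range j, ((n : ℝ) - i) := by
    rw [Nat.descFactorial_eq_prod_range]
    push_cast [Nat.cast_prod]
    refine Finset.prod_congr rfl fun i hi => ?_
    have : i ≤ n := le_trans (le_of_lt (Finset.mem_range.mp hi)) h
    push_cast [Nat.cast_sub this]
    ring
  rw [eq_div_iff (by positivity : ((n - j).factorial : ℝ) ≠ 0)]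
  rw [← hprod, mul_comm]
  exact hc

lemma erlangB_eq (n : ℕ) (lam : ℝ) (hl : 0 < lam) :
    erlangB n lam = 1 / ∑ j ∈ Finset.range (n + 1), erlA n lam j := by
  have hsum : ∑ j ∈ Finset.range (n + 1), erlA n lam j
      = (∑ k ∈ Finset.range (n + 1), lam ^ k / k.factorial) * ((n.factorial : ℝ) / lam ^ n) := by
    rw [Finset.sum_mul, ← Finset.sum_range_reflect]
    refine Finset.sum_congr rfl fun j hj => ?_
    have hj' : j ≤ n := Nat.lt_succ_iff.mp (Finset.mem_range.mp hj)
    have hnj : n + 1 - 1 - j = n - j := by omega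
    rw [hnj]
    unfold erlA
    rw [Finset.prod_div_distrib, Finset.prod_const, prod_desc n (n - j) (by omega)]
    have hrw : n - (n - j) = j := by omega
    rw [hrw, Finset.card_range]
    have hpow : lam ^ n = lam ^ (n - j) * lam ^ j := by
      rw [← pow_add]; congr 1; omega
    field_simp [hpow]
    linear_combination hpow
  rw [erlangB, hsum]
  have h1 : (lam ^ n : ℝ) ≠ 0 := by positivity
  have h2 : ((n.factorial : ℝ)) ≠ 0 := by positivity
  field_simp
lemma sumX_eq (n : ℕ) (lam : ℝ) (j : ℕ) :
    ∑ i ∈ Finset.range j, (((n : ℝ) - lam - i) / lam)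
      = ((j : ℝ) * ((n : ℝ) - lam) - (j : ℝ) * ((j : ℝ) - 1) / 2) / lam := by
  rw [← Finset.sum_div]
  congr 1
  rw [Finset.sum_sub_distrib, Finset.sum_const, gauss_cast, Finset.card_range]
  push_cast
  ring

lemma erlA_nonneg (n : ℕ) (lam : ℝ) (j : ℕ) (hl : 0 < lam) (hj : j ≤ n) :
    0 ≤ erlA n lam j := by
  refine Finset.prod_nonneg fun i hi => ?_
  have hi' : i < n := lt_of_lt_of_le (Finset.mem_range.mp hi) hj
  have : (i : ℝ) ≤ n := by exact_mod_cast hi'.le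
  exact div_nonneg (by linarith) hl.le

lemma erlA_le (n : ℕ) (lam : ℝ) (j : ℕ) (hl : 0 < lam) (hj : j ≤ n) :
    erlA n lam j ≤ Real.exp (∑ i ∈ Finset.range j, (((n : ℝ) - lam - i) / lam)) := by
  rw [Real.exp_sum]
  refine Finset.prod_le_prod (fun i hi => ?_) (fun i hi => ?_)
  · have hi' : i < n := lt_of_lt_of_le (Finset.mem_range.mp hi) hj
    have : (i : ℝ) ≤ n := by exact_mod_cast hi'.le
    exact div_nonneg (by linarith) hl.le
  · have heq : ((n : ℝ) - i) / lam = ((n : ℝ) - lam - i) / lam + 1 := by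
      field_simp; ring
    rw [heq]
    exact Real.add_one_le_exp _

lemma le_erlA (n : ℕ) (lam : ℝ) (j : ℕ) (hl : 0 < lam) (hj : j ≤ n)
    (hx : ∀ i ∈ Finset.range j, |((n : ℝ) - lam - i) / lam| ≤ 1) :
    Real.exp (∑ i ∈ Finset.range j, (((n : ℝ) - lam - i) / lam))
      * (1 - ∑ i ∈ Finset.range j, (((n : ℝ) - lam - i) / lam) ^ 2) ≤ erlA n lam j := by
  set X : ℕ → ℝ := fun i => ((n : ℝ) - lam - i) / lam with hX
  have step1 : Real.exp (∑ i ∈ Finset.range j, X i)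
      * (1 - ∑ i ∈ Finset.range j, (X i) ^ 2)
      ≤ ∏ i ∈ Finset.range j, (Real.exp (X i) * (1 - (X i) ^ 2)) := by
    rw [Finset.prod_mul_distrib, ← Real.exp_sum]
    have hw : 1 - ∑ i ∈ Finset.range j, (X i) ^ 2 ≤ ∏ i ∈ Finset.range j, (1 - (X i) ^ 2) := by
      refine weierstrass _ _ (fun i hi => sq_nonneg _) (fun i hi => ?_)
      have := hx i hi
      nlinarith [abs_nonneg (X i), sq_abs (X i)]
    have hexp : (0:ℝ) ≤ Real.exp (∑ i ∈ Finset.range j, X i) := (Real.exp_pos _).le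
    nlinarith
  refine le_trans step1 (Finset.prod_le_prod (fun i hi => ?_) (fun i hi => ?_))
  · have := hx i hi
    have h1 : (X i) ^ 2 ≤ 1 := by nlinarith [abs_nonneg (X i), sq_abs (X i)]
    have := (Real.exp_pos (X i)).le
    nlinarith
  · -- exp x * (1 - x^2) ≤ 1 + x = ((n:ℝ)-i)/lam
    have key : Real.exp (X i) * (1 - (X i) ^ 2) ≤ 1 + X i := by
      have h2 : 1 - X i ≤ Real.exp (-X i) := by
        have := Real.add_one_le_exp (-X i); linarith
      have h3 : Real.exp (X i) * Real.exp (-X i) = 1 := by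
        rw [← Real.exp_add]; simp
      have h4 : 1 + X i ≥ 0 := by
        have := hx i hi
        have := abs_le.mp this
        linarith [this.1]
      have h5 : (1 + X i) * (1 - X i) ≤ (1 + X i) * Real.exp (-X i) :=
        mul_le_mul_of_nonneg_left h2 h4
      calc Real.exp (X i) * (1 - (X i) ^ 2)
          = Real.exp (X i) * ((1 + X i) * (1 - X i)) := by ring
        _ ≤ Real.exp (X i) * ((1 + X i) * Real.exp (-X i)) :=
            mul_le_mul_of_nonneg_left h5 (Real.exp_pos _).le
        _ = (1 + X i) * (Real.exp (X i) * Real.exp (-X i)) := by ring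
        _ = 1 + X i := by rw [h3, mul_one]
    have heq : ((n : ℝ) - i) / lam = 1 + X i := by
      rw [hX]; field_simp; ring
    rw [heq]
    exact key
lemma integrable_gauss : Integrable (fun t : ℝ => Real.exp (-t ^ 2 / 2)) := by
  have h := integrable_exp_neg_mul_sq (by norm_num : (0:ℝ) < 1/2)
  have heq : ∀ t : ℝ, -t ^ 2 / 2 = -(1/2) * t ^ 2 := fun t => by ring
  simp_rw [heq]; exact h

lemma integrable_pdf : Integrable stdGaussianPDF := by
  unfold stdGaussianPDF
  exact integrable_gauss.div_const _

lemma pdf_pos (x : ℝ) : 0 < stdGaussianPDF x := by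
  unfold stdGaussianPDF
  exact div_pos (Real.exp_pos _) (Real.sqrt_pos.mpr (by positivity))

lemma cdf_pos (x : ℝ) : 0 < stdGaussianCDF x := by
  rw [stdGaussianCDF, setIntegral_pos_iff_support_of_nonneg_ae
    (Filter.Eventually.of_forall fun t => (pdf_pos t).le) integrable_pdf.integrableOn]
  have hsupp : Function.support stdGaussianPDF = Set.univ :=
    Set.eq_univ_of_forall fun t => (pdf_pos t).ne'
  rw [hsupp, Set.univ_inter, Real.volume_Iic]
  exact ENNReal.zero_lt_top

lemma integrable_expquad (c : ℝ) : Integrable (fun t : ℝ => Real.exp (c * t - t ^ 2 / 2)) := by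
  have h1 := integrable_gauss.comp_sub_right c
  have h2 := h1.const_mul (Real.exp (c ^ 2 / 2))
  refine h2.congr (Filter.Eventually.of_forall fun t => ?_)
  show Real.exp (c ^ 2 / 2) * Real.exp (-(t - c) ^ 2 / 2) = Real.exp (c * t - t ^ 2 / 2)
  rw [← Real.exp_add]
  congr 1
  ring

lemma key_integral (b : ℝ) :
    ∫ t in Set.Ioi (0:ℝ), Real.exp (b * t - t ^ 2 / 2)
      = Real.exp (b ^ 2 / 2) * ∫ u in Set.Iic b, Real.exp (-u ^ 2 / 2) := by
  have heq : ∀ t : ℝ, b * t - t ^ 2 / 2 = b ^ 2 / 2 + (-(t - b) ^ 2 / 2) := fun t => by ring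
  simp_rw [heq, Real.exp_add]
  rw [integral_const_mul]
  congr 1
  have h1 : ∫ t in Set.Ioi (0:ℝ), Real.exp (-(t - b) ^ 2 / 2)
      = ∫ u in Set.Ioi (-b), Real.exp (-u ^ 2 / 2) := by
    rw [← integral_indicator measurableSet_Ioi, ← integral_indicator measurableSet_Ioi,
      ← integral_add_right_eq_self
        (fun t => (Set.Ioi (0:ℝ)).indicator (fun t => Real.exp (-(t - b) ^ 2 / 2)) t) b]
    congr 1
    funext t
    by_cases h : 0 < t + b
    · rw [Set.indicator_of_mem (Set.mem_Ioi.mpr h),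
        Set.indicator_of_mem (Set.mem_Ioi.mpr (by linarith : -b < t))]
      congr 2
      ring
    · rw [Set.indicator_of_notMem (fun hc => h (Set.mem_Ioi.mp hc)),
        Set.indicator_of_notMem (fun hc => h (by have := Set.mem_Ioi.mp hc; linarith))]
  have h2 : ∫ u in Set.Ioi (-b), Real.exp (-u ^ 2 / 2)
      = ∫ u in Set.Iic b, Real.exp (-u ^ 2 / 2) := by
    have h3 := integral_comp_neg_Ioi (-b) (fun u : ℝ => Real.exp (-u ^ 2 / 2))
    rw [neg_neg] at h3
    rw [← h3]
    refine setIntegral_congr_fun measurableSet_Ioi fun u _ => ?_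
    rw [neg_sq]
  rw [h1, h2]

lemma final_integral (b : ℝ) :
    ∫ t in Set.Ioi (0:ℝ), Real.exp (b * t - t ^ 2 / 2)
      = stdGaussianCDF b / stdGaussianPDF b := by
  rw [key_integral]
  have hcdf : stdGaussianCDF b
      = (∫ u in Set.Iic b, Real.exp (-u ^ 2 / 2)) / Real.sqrt (2 * Real.pi) := by
    unfold stdGaussianCDF stdGaussianPDF
    rw [integral_div]
  rw [hcdf]
  unfold stdGaussianPDF
  have hs : Real.sqrt (2 * Real.pi) ≠ 0 := (Real.sqrt_pos.mpr (by positivity)).ne'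
  have he : Real.exp (-b ^ 2 / 2) * Real.exp (b ^ 2 / 2) = 1 := by
    rw [← Real.exp_add]; ring_nf; exact Real.exp_zero
  field_simp
  rw [neg_div] at he; linear_combination (∫ u in Set.Iic b, Real.exp (-(u ^ 2 / 2))) * he
noncomputable def stepg (n : ℕ) (lam : ℝ) (t : ℝ) : ℝ :=
  ∑ j ∈ Finset.range (n + 1),
    (Set.Ico ((j : ℝ) / Real.sqrt lam) (((j : ℝ) + 1) / Real.sqrt lam)).indicator
      (fun _ => erlA n lam j) t

lemma stepg_meas (n : ℕ) (lam : ℝ) : Measurable (stepg n lam) := by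
  unfold stepg
  exact Finset.measurable_sum _ fun j _ => (measurable_const).indicator measurableSet_Ico

lemma stepg_mem_iff (lam t : ℝ) (hl : 0 < lam) (ht : 0 ≤ t) (j : ℕ) :
    t ∈ Set.Ico ((j : ℝ) / Real.sqrt lam) (((j : ℝ) + 1) / Real.sqrt lam)
      ↔ ⌊t * Real.sqrt lam⌋₊ = j := by
  have hr : 0 < Real.sqrt lam := Real.sqrt_pos.mpr hl
  rw [Set.mem_Ico, div_le_iff₀ hr, lt_div_iff₀ hr, Nat.floor_eq_iff (mul_nonneg ht hr.le)]

lemma stepg_eval (n : ℕ) (lam t : ℝ) (hl : 0 < lam) (ht : 0 ≤ t) :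
    stepg n lam t = if ⌊t * Real.sqrt lam⌋₊ ≤ n then erlA n lam ⌊t * Real.sqrt lam⌋₊ else 0 := by
  by_cases hn : ⌊t * Real.sqrt lam⌋₊ ≤ n
  · rw [if_pos hn]
    unfold stepg
    rw [Finset.sum_eq_single_of_mem ⌊t * Real.sqrt lam⌋₊
      (Finset.mem_range.mpr (Nat.lt_succ_of_le hn))]
    · exact Set.indicator_of_mem ((stepg_mem_iff lam t hl ht _).mpr rfl) _
    · intro j hj hne
      exact Set.indicator_of_notMem
        (fun hm => hne ((stepg_mem_iff lam t hl ht j).mp hm).symm) _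
  · rw [if_neg hn]
    unfold stepg
    refine Finset.sum_eq_zero fun j hj => ?_
    refine Set.indicator_of_notMem (fun hm => ?_) _
    have hfl := (stepg_mem_iff lam t hl ht j).mp hm
    exact hn (hfl ▸ Nat.lt_succ_iff.mp (Finset.mem_range.mp hj))

lemma vol_inter (a b : ℝ) (ha : 0 ≤ a) (hab : a ≤ b) :
    volume (Set.Ioi (0:ℝ) ∩ Set.Ico a b) = ENNReal.ofReal (b - a) := by
  apply le_antisymm
  · exact le_trans (measure_mono Set.inter_subset_right) (le_of_eq Real.volume_Ico)
  · have hsub : Set.Ioo a b ⊆ Set.Ioi (0:ℝ) ∩ Set.Ico a b :=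
      fun x hx => ⟨lt_of_le_of_lt ha hx.1, hx.1.le, hx.2⟩
    calc ENNReal.ofReal (b - a) = volume (Set.Ioo a b) := (Real.volume_Ioo).symm
      _ ≤ _ := measure_mono hsub

lemma stepg_integral (n : ℕ) (lam : ℝ) (hl : 0 < lam) :
    ∫ t in Set.Ioi (0:ℝ), stepg n lam t
      = (∑ j ∈ Finset.range (n + 1), erlA n lam j) / Real.sqrt lam := by
  have hr : 0 < Real.sqrt lam := Real.sqrt_pos.mpr hl
  unfold stepg
  rw [MeasureTheory.integral_finset_sum]
  · rw [Finset.sum_div]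
    refine Finset.sum_congr rfl fun j hj => ?_
    rw [setIntegral_indicator measurableSet_Ico, setIntegral_const]
    have hd : ((j : ℝ) + 1) / Real.sqrt lam - (j : ℝ) / Real.sqrt lam = 1 / Real.sqrt lam := by
      field_simp
      ring
    rw [measureReal_def, vol_inter _ _ (by positivity) (by gcongr; linarith), hd,
      ENNReal.toReal_ofReal (by positivity : (0:ℝ) ≤ 1 / Real.sqrt lam),
      smul_eq_mul, one_div, inv_mul_eq_div]
  · intro j hj
    rw [integrable_indicator_iff measurableSet_Ico]
    refine (integrableOn_const_iff).mpr (Or.inr ?_)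
    exact lt_of_le_of_lt (Measure.restrict_apply_le _ _)
      (by rw [Real.volume_Ico]; exact ENNReal.ofReal_lt_top)
lemma stepg_nonneg (n : ℕ) (lam t : ℝ) (hl : 0 < lam) (ht : 0 ≤ t) :
    0 ≤ stepg n lam t := by
  rw [stepg_eval n lam t hl ht]
  split
  · exact erlA_nonneg _ _ _ hl (by assumption)
  · exact le_refl 0

lemma stepg_bound (n : ℕ) (lam : ℝ) (c : ℝ) (hc : 0 ≤ c) (hl1 : 1 ≤ lam)
    (hln : lam < (n : ℝ)) (hnl : (n : ℝ) - lam ≤ c * Real.sqrt lam) (t : ℝ) (ht : 0 < t) :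
    stepg n lam t ≤ Real.exp ((c + 3/2) * t - t ^ 2 / 2) := by
  have hl : 0 < lam := lt_of_lt_of_le one_pos hl1
  have hr : 0 < Real.sqrt lam := Real.sqrt_pos.mpr hl
  have hrr : Real.sqrt lam * Real.sqrt lam = lam := Real.mul_self_sqrt hl.le
  have hr1 : 1 ≤ Real.sqrt lam := by
    rw [show (1:ℝ) = Real.sqrt 1 from (Real.sqrt_one).symm]
    exact Real.sqrt_le_sqrt hl1
  have hrlam : Real.sqrt lam ≤ lam := by nlinarith
  rw [stepg_eval n lam t hl ht.le]
  set r := Real.sqrt lam with hrdef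
  set u := t * r with hudef
  set j := ⌊u⌋₊ with hjdef
  have hu0 : 0 ≤ u := mul_nonneg ht.le hr.le
  have hj_le : (j : ℝ) ≤ u := Nat.floor_le hu0
  have hj_gt : u < (j : ℝ) + 1 := Nat.lt_floor_add_one u
  have hj0 : (0:ℝ) ≤ j := Nat.cast_nonneg j
  have hjj : (u ^ 2 - 3 * u) ≤ (j : ℝ) * ((j : ℝ) - 1) := by
    rcases le_or_gt u 2 with h | h
    · have hnn : (0:ℝ) ≤ (j : ℝ) * ((j : ℝ) - 1) := by
        rcases Nat.eq_zero_or_pos j with h0 | h0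
        · simp [h0]
        · have h1 : (1:ℝ) ≤ (j : ℝ) := by exact_mod_cast h0
          nlinarith
      nlinarith
    · have h2 : (1:ℝ) ≤ (j : ℝ) := by linarith
      nlinarith
  split
  · rename_i hn
    have hn' : (j : ℕ) ≤ n := hn
    refine le_trans (erlA_le n lam j hl hn') (Real.exp_le_exp.mpr ?_)
    rw [sumX_eq]
    rw [div_le_iff₀ hl]
    have hnlam0 : (0:ℝ) ≤ (n : ℝ) - lam := by linarith
    have h1 : (j : ℝ) * ((n : ℝ) - lam) ≤ u * (c * r) :=
      mul_le_mul hj_le hnl hnlam0 hu0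
    have h2 : u * (c * r) = c * t * lam := by rw [hudef]; linear_combination c * t * hrr
    have h3 : u ^ 2 = t ^ 2 * lam := by rw [hudef]; linear_combination t ^ 2 * hrr
    have h4 : t * r ≤ t * lam := mul_le_mul_of_nonneg_left hrlam ht.le
    nlinarith
  · positivity
lemma sqrt_alg1 (x n r : ℝ) (hn : n = r * r) (hr : 0 < r) :
    r * (1 - x / n) = (n - x) / r := by
  subst hn
  field_simp

lemma sqrt_alg2 (x n r : ℝ) (hn : n = r * r) (hr : r ≠ 0) :
    (n - x) / r * (1 / r) = (n - x) / n := by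
  subst hn
  field_simp

lemma sqrt_alg4 (a b l r : ℝ) (hl : l = r * r) (hr : r ≠ 0) :
    (a * b - a * (a - 1) / 2) / l
      = a / r * (b / r) - a / r * (a / r - 1 / r) / 2 := by
  subst hl
  field_simp

lemma sqrt_alg5 (a b l r : ℝ) (hl : l = r * r) (hr : r ≠ 0) :
    a * ((b + a) / l) ^ 2 = a / r * (b / r + a / r) ^ 2 * (1 / r) := by
  subst hl
  rw [← add_div, div_pow]
  field_simp

lemma sqrt_alg6 (x l r : ℝ) (hl : l = r * r) (hr : r ≠ 0) :
    x / r * (1 / r) = x / l := by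
  subst hl
  field_simp
theorem erlangB_tendsto_qed (β : ℝ) (hβ : 0 < β) (s : ℝ → ℕ)
    (hs : ∀ lam : ℝ, 0 < lam → 0 < s lam ∧ lam < s lam)
    (hscale : Tendsto (fun lam : ℝ => Real.sqrt (s lam) * (1 - lam / (s lam : ℝ)))
      atTop (nhds β)) :
    Tendsto (fun lam : ℝ => Real.sqrt lam * erlangB (s lam) lam) atTop
      (nhds (stdGaussianPDF β / stdGaussianCDF β)) := by
  have hev_pos : ∀ᶠ lam : ℝ in atTop, 0 < lam := eventually_gt_atTop 0
  have hev_lt : ∀ᶠ lam : ℝ in atTop, lam < (s lam : ℝ) :=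
    hev_pos.mono fun l hl => (hs l hl).2
  have htop_n : Tendsto (fun l : ℝ => ((s l : ℕ) : ℝ)) atTop atTop :=
    tendsto_atTop_mono' atTop (hev_lt.mono fun l h => h.le) tendsto_id
  have hsqrt_tendsto : Tendsto Real.sqrt atTop atTop := by
    rw [show Real.sqrt = fun x : ℝ => x ^ (1/2 : ℝ) from funext fun x => Real.sqrt_eq_rpow x]
    exact tendsto_rpow_atTop (by norm_num)
  have hsqrt_n : Tendsto (fun l : ℝ => Real.sqrt (s l)) atTop atTop := hsqrt_tendsto.comp htop_n
  have hsqrt_l : Tendsto (fun l : ℝ => Real.sqrt l) atTop atTop := hsqrt_tendsto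
  have hinv_sqrt_l : Tendsto (fun l : ℝ => 1 / Real.sqrt l) atTop (nhds 0) := by
    exact hsqrt_l.inv_tendsto_atTop.congr (fun l => by simp [one_div])
  have hinv_sqrt_n : Tendsto (fun l : ℝ => 1 / Real.sqrt (s l)) atTop (nhds 0) := by
    exact hsqrt_n.inv_tendsto_atTop.congr (fun l => by simp [one_div])
  have hfacts : ∀ᶠ l : ℝ in atTop, 0 < l ∧ l < (s l : ℝ) ∧ 0 < ((s l : ℕ) : ℝ) ∧
      0 < Real.sqrt l ∧ 0 < Real.sqrt (s l) ∧
      Real.sqrt l * Real.sqrt l = l ∧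
      Real.sqrt (s l) * Real.sqrt (s l) = (s l : ℝ) := by
    filter_upwards [hev_pos, hev_lt] with l hl hlt
    have hn0 : (0:ℝ) < (s l : ℝ) := lt_trans hl hlt
    exact ⟨hl, hlt, hn0, Real.sqrt_pos.mpr hl, Real.sqrt_pos.mpr hn0,
      Real.mul_self_sqrt hl.le, Real.mul_self_sqrt hn0.le⟩
  have hd : Tendsto (fun l : ℝ => ((s l : ℝ) - l) / Real.sqrt (s l)) atTop (nhds β) := by
    refine hscale.congr' ?_
    filter_upwards [hfacts] with l ⟨hl, hlt, hn0, hrl, hrn, hrrl, hrrn⟩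
    exact sqrt_alg1 l (s l) (Real.sqrt (s l)) hrrn.symm hrn
  have hn_div : Tendsto (fun l : ℝ => ((s l : ℝ) - l) / (s l : ℝ)) atTop (nhds 0) := by
    have h := hd.mul hinv_sqrt_n
    rw [mul_zero] at h
    refine h.congr' ?_
    filter_upwards [hfacts] with l ⟨hl, hlt, hn0, hrl, hrn, hrrl, hrrn⟩
    exact sqrt_alg2 l (s l) (Real.sqrt (s l)) hrrn.symm hrn.ne'
  have hratio : Tendsto (fun l : ℝ => l / (s l : ℝ)) atTop (nhds 1) := by
    have h := (tendsto_const_nhds (x := (1:ℝ)) (f := (atTop : Filter ℝ))).sub hn_div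
    rw [sub_zero] at h
    refine h.congr' ?_
    filter_upwards [hfacts] with l ⟨hl, hlt, hn0, hrl, hrn, hrrl, hrrn⟩
    field_simp
    ring
  have hratio' : Tendsto (fun l : ℝ => (s l : ℝ) / l) atTop (nhds 1) := by
    have h := hratio.inv₀ one_ne_zero
    rw [inv_one] at h
    refine h.congr' ?_
    filter_upwards [] with l
    rw [inv_div]
  have hc : Tendsto (fun l : ℝ => ((s l : ℝ) - l) / Real.sqrt l) atTop (nhds β) := by
    have hsq : Tendsto (fun l : ℝ => Real.sqrt ((s l : ℝ) / l)) atTop (nhds 1) := by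
      have h := (Real.continuous_sqrt.tendsto 1).comp hratio'
      rwa [Real.sqrt_one] at h
    have h := hd.mul hsq
    rw [mul_one] at h
    refine h.congr' ?_
    filter_upwards [hfacts] with l ⟨hl, hlt, hn0, hrl, hrn, hrrl, hrrn⟩
    rw [Real.sqrt_div hn0.le l]
    field_simp
  -- pointwise convergence of the step functions
  have hpt : ∀ t : ℝ, t ∈ Set.Ioi (0:ℝ) →
      Tendsto (fun l : ℝ => stepg (s l) l t) atTop
        (nhds (Real.exp (β * t - t ^ 2 / 2))) := by
    intro t ht
    rw [Set.mem_Ioi] at ht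
    set j : ℝ → ℕ := fun l => ⌊t * Real.sqrt l⌋₊ with hjdef
    have hq : Tendsto (fun l : ℝ => (j l : ℝ) / Real.sqrt l) atTop (nhds t) := by
      have hlow : Tendsto (fun l : ℝ => t - 1 / Real.sqrt l) atTop (nhds t) := by
        have h := (tendsto_const_nhds (x := t) (f := (atTop : Filter ℝ))).sub hinv_sqrt_l
        rwa [sub_zero] at h
      refine tendsto_of_tendsto_of_tendsto_of_le_of_le' hlow tendsto_const_nhds ?_ ?_
      · filter_upwards [hfacts] with l ⟨hl, hlt, hn0, hrl, hrn, hrrl, hrrn⟩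
        have hx : (t - 1 / Real.sqrt l) * Real.sqrt l = t * Real.sqrt l - 1 := by
          field_simp
        rw [le_div_iff₀ hrl, hx]
        linarith [Nat.lt_floor_add_one (t * Real.sqrt l)]
      · filter_upwards [hfacts] with l ⟨hl, hlt, hn0, hrl, hrn, hrrl, hrrn⟩
        rw [div_le_iff₀ hrl]
        exact Nat.floor_le (by positivity)
    have hjn : ∀ᶠ l : ℝ in atTop, j l ≤ s l := by
      filter_upwards [hfacts, hsqrt_l.eventually_ge_atTop t] with l
        ⟨hl, hlt, hn0, hrl, hrn, hrrl, hrrn⟩ hts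
      have h1 : (j l : ℝ) ≤ t * Real.sqrt l := Nat.floor_le (by positivity)
      have h2 : t * Real.sqrt l ≤ l := by nlinarith
      have h3 : (j l : ℝ) ≤ (s l : ℝ) := by linarith
      exact_mod_cast h3
    have hS : Tendsto (fun l : ℝ =>
        ((j l : ℝ) * ((s l : ℝ) - l) - (j l : ℝ) * ((j l : ℝ) - 1) / 2) / l)
        atTop (nhds (β * t - t ^ 2 / 2)) := by
      have h := (hq.mul hc).sub ((hq.mul (hq.sub hinv_sqrt_l)).div_const 2)
      rw [show t * β - t * (t - 0) / 2 = β * t - t ^ 2 / 2 by ring] at h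
      refine h.congr' ?_
      filter_upwards [hfacts] with l ⟨hl, hlt, hn0, hrl, hrn, hrrl, hrrn⟩
      exact (sqrt_alg4 (j l) ((s l : ℝ) - l) l (Real.sqrt l) hrrl.symm hrl.ne').symm
    have hM : Tendsto (fun l : ℝ => ((s l : ℝ) - l + (j l : ℝ)) / l) atTop (nhds 0) := by
      have h := (hc.add hq).mul hinv_sqrt_l
      rw [mul_zero] at h
      refine h.congr' ?_
      filter_upwards [hfacts] with l ⟨hl, hlt, hn0, hrl, hrn, hrrl, hrrn⟩
      rw [← add_div]
      exact sqrt_alg6 _ l _ hrrl.symm hrl.ne'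
    have hU : Tendsto (fun l : ℝ =>
        (j l : ℝ) * ((((s l : ℝ) - l) + (j l : ℝ)) / l) ^ 2) atTop (nhds 0) := by
      have h := (hq.mul ((hc.add hq).pow 2)).mul hinv_sqrt_l
      rw [mul_zero] at h
      refine h.congr' ?_
      filter_upwards [hfacts] with l ⟨hl, hlt, hn0, hrl, hrn, hrrl, hrrn⟩
      exact (sqrt_alg5 (j l) ((s l : ℝ) - l) l (Real.sqrt l) hrrl.symm hrl.ne').symm
    have hE : Tendsto (fun l : ℝ =>
        ∑ i ∈ Finset.range (j l), (((s l : ℝ) - l - i) / l) ^ 2) atTop (nhds 0) := by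
      refine tendsto_of_tendsto_of_tendsto_of_le_of_le' tendsto_const_nhds hU ?_ ?_
      · exact Eventually.of_forall fun l => Finset.sum_nonneg fun i _ => sq_nonneg _
      · filter_upwards [hfacts] with l ⟨hl, hlt, hn0, hrl, hrn, hrrl, hrrn⟩
        have hb : ∀ i ∈ Finset.range (j l),
            (((s l : ℝ) - l - i) / l) ^ 2 ≤ ((((s l : ℝ) - l) + (j l : ℝ)) / l) ^ 2 := by
          intro i hi
          have hi' : (i : ℝ) ≤ (j l : ℝ) := by
            exact_mod_cast (Finset.mem_range.mp hi).le
          have hij0 : (0:ℝ) ≤ (i : ℝ) := Nat.cast_nonneg _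
          apply sq_le_sq'
          · rw [← neg_div, div_le_div_iff₀ hl hl]
            nlinarith
          · rw [div_le_div_iff₀ hl hl]
            nlinarith
        calc ∑ i ∈ Finset.range (j l), (((s l : ℝ) - l - i) / l) ^ 2
            ≤ (Finset.range (j l)).card • ((((s l : ℝ) - l) + (j l : ℝ)) / l) ^ 2 :=
              Finset.sum_le_card_nsmul _ _ _ hb
          _ = (j l : ℝ) * ((((s l : ℝ) - l) + (j l : ℝ)) / l) ^ 2 := by
              rw [Finset.card_range, nsmul_eq_mul]
    have hsmall : ∀ᶠ l : ℝ in atTop, ∀ i ∈ Finset.range (j l),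
        |((s l : ℝ) - l - i) / l| ≤ 1 := by
      have hM1 : ∀ᶠ l : ℝ in atTop, ((s l : ℝ) - l + (j l : ℝ)) / l < 1 :=
        hM.eventually_lt_const one_pos
      filter_upwards [hfacts, hM1] with l ⟨hl, hlt, hn0, hrl, hrn, hrrl, hrrn⟩ hm1
      intro i hi
      have hi' : (i : ℝ) ≤ (j l : ℝ) := by exact_mod_cast (Finset.mem_range.mp hi).le
      have hij0 : (0:ℝ) ≤ (i : ℝ) := Nat.cast_nonneg _
      have hjl0 : (0:ℝ) ≤ (j l : ℝ) := Nat.cast_nonneg _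
      have hm1' : (s l : ℝ) - l + (j l : ℝ) < l := (div_lt_one hl).mp hm1
      rw [abs_le]
      constructor
      · rw [show (-1 : ℝ) = (-l) / l by field_simp, div_le_div_iff₀ hl hl]
        nlinarith
      · rw [show (1 : ℝ) = l / l by field_simp, div_le_div_iff₀ hl hl]
        nlinarith
    have hexpS : Tendsto (fun l : ℝ => Real.exp
        (((j l : ℝ) * ((s l : ℝ) - l) - (j l : ℝ) * ((j l : ℝ) - 1) / 2) / l))
        atTop (nhds (Real.exp (β * t - t ^ 2 / 2))) :=
      (Real.continuous_exp.tendsto _).comp hS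
    have hlower : Tendsto (fun l : ℝ => Real.exp
        (((j l : ℝ) * ((s l : ℝ) - l) - (j l : ℝ) * ((j l : ℝ) - 1) / 2) / l)
        * (1 - ∑ i ∈ Finset.range (j l), (((s l : ℝ) - l - i) / l) ^ 2))
        atTop (nhds (Real.exp (β * t - t ^ 2 / 2))) := by
      have h := hexpS.mul ((tendsto_const_nhds (x := (1:ℝ))).sub hE)
      rwa [sub_zero, mul_one] at h
    refine tendsto_of_tendsto_of_tendsto_of_le_of_le' hlower hexpS ?_ ?_
    · filter_upwards [hfacts, hjn, hsmall] with l ⟨hl, hlt, hn0, hrl, hrn, hrrl, hrrn⟩ hjn' hsm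
      rw [stepg_eval _ _ _ hl ht.le, if_pos hjn', ← sumX_eq]
      exact le_erlA (s l) l (j l) hl hjn' hsm
    · filter_upwards [hfacts, hjn] with l ⟨hl, hlt, hn0, hrl, hrn, hrrl, hrrn⟩ hjn'
      rw [stepg_eval _ _ _ hl ht.le, if_pos hjn', ← sumX_eq]
      exact erlA_le (s l) l (j l) hl hjn'
  -- dominated convergence
  have hIview : ∫ t in Set.Ioi (0:ℝ), Real.exp (β * t - t ^ 2 / 2)
      = stdGaussianCDF β / stdGaussianPDF β := final_integral β
  have hDCT : Tendsto (fun l : ℝ => ∫ t in Set.Ioi (0:ℝ), stepg (s l) l t) atTop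
      (nhds (∫ t in Set.Ioi (0:ℝ), Real.exp (β * t - t ^ 2 / 2))) := by
    have hev_c : ∀ᶠ l : ℝ in atTop, ((s l : ℝ) - l) ≤ (β + 1) * Real.sqrt l := by
      filter_upwards [hfacts, hc.eventually_lt_const (lt_add_one β)] with l
        ⟨hl, hlt, hn0, hrl, hrn, hrrl, hrrn⟩ hlt2
      exact le_of_lt ((div_lt_iff₀ hrl).mp hlt2)
    refine tendsto_integral_filter_of_dominated_convergence
      (fun t => Real.exp ((β + 1 + 3/2) * t - t ^ 2 / 2))
      (Eventually.of_forall fun l => (stepg_meas (s l) l).aestronglyMeasurable) ?_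
      (integrable_expquad (β + 1 + 3/2)).integrableOn ?_
    · filter_upwards [hfacts, hev_c, eventually_ge_atTop (1:ℝ)] with l
        ⟨hl, hlt, hn0, hrl, hrn, hrrl, hrrn⟩ hcl h1
      refine (ae_restrict_iff' measurableSet_Ioi).mpr (Eventually.of_forall fun t ht => ?_)
      rw [Set.mem_Ioi] at ht
      rw [Real.norm_eq_abs, abs_of_nonneg (stepg_nonneg _ _ _ hl ht.le)]
      exact stepg_bound (s l) l (β + 1) (by linarith) h1 hlt hcl t ht
    · exact (ae_restrict_iff' measurableSet_Ioi).mpr (Eventually.of_forall hpt)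
  rw [hIview] at hDCT
  have hSum : Tendsto (fun l : ℝ =>
      (∑ k ∈ Finset.range (s l + 1), erlA (s l) l k) / Real.sqrt l) atTop
      (nhds (stdGaussianCDF β / stdGaussianPDF β)) := by
    refine hDCT.congr' ?_
    filter_upwards [hev_pos] with l hl
    exact stepg_integral (s l) l hl
  have hne : stdGaussianCDF β / stdGaussianPDF β ≠ 0 :=
    ne_of_gt (div_pos (cdf_pos β) (pdf_pos β))
  have hfin := hSum.inv₀ hne
  rw [inv_div] at hfin
  refine hfin.congr' ?_
  filter_upwards [hev_pos] with l hl
  rw [erlangB_eq (s l) l hl, inv_div, mul_one_div]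
end

section
/- (Jagers–van Doorn integral representation) For every positive integer s and every real λ with 0 < λ < s, the reciprocal of the Erlang C formula admits the representation C(s,λ)^{−1} = λ · ∫_0^∞ t · e^{−λt} · (1+t)^{s−1} dt. -/
open MeasureTheory

section Aux

open Finset Set

lemma erlangC_key_integrable (n : ℕ) {b : ℝ} (hb : 0 < b) :
    IntegrableOn (fun t : ℝ => t ^ n * Real.exp (-b * t)) (Set.Ioi 0) := by
  have h := integrableOn_rpow_mul_exp_neg_mul_rpow (s := (n : ℝ)) (p := 1)
    (neg_one_lt_zero.trans_le (Nat.cast_nonneg n)) one_pos hb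
  simpa [Real.rpow_natCast, Real.rpow_one] using h

lemma erlangC_key_integral (n : ℕ) {b : ℝ} (hb : 0 < b) :
    ∫ t in Set.Ioi (0:ℝ), t ^ n * Real.exp (-b * t) = n.factorial / b ^ (n+1) := by
  have h := Real.integral_rpow_mul_exp_neg_mul_Ioi (a := (n : ℝ) + 1) (by positivity) hb
  rw [show ((n:ℝ) + 1 - 1) = ((n : ℕ) : ℝ) by ring] at h
  rw [show ((n:ℝ) + 1) = ((n + 1 : ℕ) : ℝ) by push_cast; ring] at h
  rw [Real.rpow_natCast, Nat.cast_add, Nat.cast_one, Real.Gamma_nat_eq_factorial] at h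
  simp only [Real.rpow_natCast, neg_mul] at h
  rw [show (fun t : ℝ => t ^ n * Real.exp (-b * t)) = fun t : ℝ => t ^ n * Real.exp (-(b * t))
    by funext t; rw [neg_mul], h]
  rw [one_div, inv_pow]
  field_simp

lemma erlangC_tel (lam : ℝ) (n : ℕ) :
    ∑ k ∈ range (n+1), (lam - k) * lam ^ k / k.factorial = lam ^ (n+1) / n.factorial := by
  induction n with
  | zero => simp
  | succ m ih =>
    rw [sum_range_succ, ih]
    have h1 : (m.factorial : ℝ) ≠ 0 := Nat.cast_ne_zero.2 m.factorial_ne_zero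
    have h2 : ((m+1).factorial : ℝ) ≠ 0 := Nat.cast_ne_zero.2 (m+1).factorial_ne_zero
    have h3 : ((m+1).factorial : ℝ) = (m+1) * m.factorial := by
      rw [Nat.factorial_succ]; push_cast; ring
    field_simp [h3]
    rw [h3]; push_cast
    ring

lemma erlangC_termwise (n k : ℕ) (hk : k ≤ n) :
    ((n.choose k : ℝ)) * (n - k + 1).factorial = n.factorial * ((n : ℝ) + 1 - k) / k.factorial := by
  have h1 : (n.choose k) * k.factorial * (n-k).factorial = n.factorial :=
    Nat.choose_mul_factorial_mul_factorial hk
  have h2 : (n - k + 1).factorial = (n - k + 1) * (n - k).factorial := Nat.factorial_succ _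
  have h3 : ((n - k : ℕ) : ℝ) = (n : ℝ) - k := by
    rw [Nat.cast_sub hk]
  have hk0 : (k.factorial : ℝ) ≠ 0 := Nat.cast_ne_zero.2 k.factorial_ne_zero
  have h1' : (n.choose k : ℝ) * k.factorial * (n-k).factorial = n.factorial := by
    exact_mod_cast congrArg (Nat.cast : ℕ → ℝ) h1
  have hnk0 : ((n-k).factorial : ℝ) ≠ 0 := Nat.cast_ne_zero.2 (n-k).factorial_ne_zero
  rw [h2]
  push_cast [h3]
  field_simp
  nlinarith [h1']

lemma erlangC_key_sum (n : ℕ) (lam : ℝ) :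
    ((n:ℝ) + 1 - lam) * n.factorial * (∑ k ∈ range (n+1), lam ^ k / k.factorial) + lam ^ (n+1)
      = ∑ k ∈ range (n+1), (n.choose k : ℝ) * (n - k + 1).factorial * lam ^ k := by
  have step1 : ∑ k ∈ range (n+1), (n.choose k : ℝ) * (n - k + 1).factorial * lam ^ k
      = ∑ k ∈ range (n+1), (n.factorial * ((n : ℝ) + 1 - k) / k.factorial) * lam ^ k := by
    refine sum_congr rfl fun k hk => ?_
    rw [erlangC_termwise n k (Nat.lt_succ_iff.mp (mem_range.mp hk))]
  have step2 : ∀ k : ℕ, (n.factorial : ℝ) * ((n : ℝ) + 1 - k) / k.factorial * lam ^ k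
      = ((n:ℝ) + 1 - lam) * n.factorial * (lam ^ k / k.factorial)
        + n.factorial * ((lam - k) * lam ^ k / k.factorial) := by
    intro k; ring
  rw [step1]
  simp only [step2]
  rw [sum_add_distrib, ← mul_sum, ← mul_sum, erlangC_tel]
  have h1 : (n.factorial : ℝ) ≠ 0 := Nat.cast_ne_zero.2 n.factorial_ne_zero
  field_simp

end Aux

/-- The Erlang C formula (delay probability of the `M/M/s` queue). -/
noncomputable def erlangC (s : ℕ) (lam : ℝ) : ℝ :=
  (lam ^ s / s.factorial) *
    ((1 - lam / s) * ∑ k ∈ Finset.range s, lam ^ k / k.factorial + lam ^ s / s.factorial)⁻¹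

open Finset in
/-- Jagers–van Doorn integral representation of the reciprocal of the Erlang C formula. -/
theorem erlangC_inv_integral_repr (s : ℕ) (hs : 0 < s) (lam : ℝ)
    (h0 : 0 < lam) (hlt : lam < s) :
    (erlangC s lam)⁻¹ =
      lam * ∫ t in Set.Ioi (0 : ℝ), t * Real.exp (-lam * t) * (1 + t) ^ (s - 1) := by
  obtain ⟨n, rfl⟩ : ∃ n, s = n + 1 := ⟨s - 1, (Nat.succ_pred_eq_of_pos hs).symm⟩
  simp only [Nat.add_sub_cancel]
  have hl : lam ≠ 0 := ne_of_gt h0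
  have hpt : ∀ t : ℝ, t * Real.exp (-lam * t) * (1 + t) ^ n
      = ∑ k ∈ range (n+1), (n.choose k : ℝ) * (t ^ (n - k + 1) * Real.exp (-lam * t)) := by
    intro t
    rw [add_pow, Finset.mul_sum]
    exact sum_congr rfl fun k hk => by simp [pow_succ]; ring
  have hint : (∫ t in Set.Ioi (0:ℝ), t * Real.exp (-lam*t) * (1+t)^n)
      = ∑ k ∈ range (n+1), (n.choose k : ℝ) * ((n-k+1).factorial / lam ^ ((n-k+1)+1)) := by
    calc (∫ t in Set.Ioi (0:ℝ), t * Real.exp (-lam*t)*(1+t)^n)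
        = ∫ t in Set.Ioi (0:ℝ), ∑ k ∈ range (n+1),
            (n.choose k:ℝ) * (t^(n-k+1) * Real.exp (-lam*t)) := by simp_rw [hpt]
      _ = ∑ k ∈ range (n+1), ∫ t in Set.Ioi (0:ℝ),
            (n.choose k:ℝ) * (t^(n-k+1) * Real.exp (-lam*t)) :=
          integral_finset_sum _ (fun k _ => ((erlangC_key_integrable (n-k+1) h0).const_mul _))
      _ = ∑ k ∈ range (n+1), (n.choose k:ℝ) * ((n-k+1).factorial / lam ^ ((n-k+1)+1)) :=
          sum_congr rfl fun k _ => by rw [integral_const_mul, erlangC_key_integral _ h0]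
  rw [hint, Finset.mul_sum]
  have hterm : ∀ k ∈ range (n+1),
      lam * ((n.choose k:ℝ) * ((n-k+1).factorial / lam^((n-k+1)+1)))
        = (n.choose k : ℝ) * (n-k+1).factorial * lam^k / lam^(n+1) := by
    intro k hk
    have hk' : k ≤ n := Nat.lt_succ_iff.mp (mem_range.mp hk)
    have hpow : lam ^ (n+1) = lam ^ (n-k+1) * lam ^ k := by rw [← pow_add]; congr 1; omega
    rw [hpow]; field_simp; ring
  rw [sum_congr rfl hterm, ← Finset.sum_div, ← erlangC_key_sum n lam]
  rw [erlangC, mul_inv_rev, inv_inv]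
  have hf : ((n+1).factorial : ℝ) = ((n:ℝ)+1) * n.factorial := by
    rw [Nat.factorial_succ]; push_cast; ring
  have hn1 : ((n:ℝ)+1) ≠ 0 := by positivity
  have hfn : (n.factorial : ℝ) ≠ 0 := Nat.cast_ne_zero.2 n.factorial_ne_zero
  push_cast
  rw [hf]
  field_simp
end

section
/- (Upper bound on the Erlang C formula) For all reals s, λ with s > λ > 0, writing ρ = λ/s, α = √(−2s(1 − ρ + ln ρ)) and γ = (1−ρ)√s, the extended Erlang C formula satisfies C(s,λ) ≤ [ ρ + γ·( Φ(α)/φ(α) + (2/3)·1/√s ) ]^{−1}. -/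
open MeasureTheory

/-- The Erlang C formula, extended to non-integer `s` via the Jagers–van Doorn
integral representation `C(s,λ)⁻¹ = λ ∫_0^∞ t e^{−λt} (1+t)^{s−1} dt`. -/
noncomputable def erlangCExt (s lam : ℝ) : ℝ :=
  (lam * ∫ t in Set.Ioi (0 : ℝ), t * Real.exp (-lam * t) * (1 + t) ^ (s - 1))⁻¹

open Real Set Filter Topology


noncomputable def erlPsi (w : ℝ) : ℝ := w - Real.log (1 + w)

lemma erlPsi_nonneg {w : ℝ} (hw : -1 < w) : 0 ≤ erlPsi w := by
  have := Real.log_le_sub_one_of_pos (x := 1 + w) (by linarith)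
  unfold erlPsi; linarith

lemma erlPsi_pos {w : ℝ} (hw : -1 < w) (hw0 : w ≠ 0) : 0 < erlPsi w := by
  have h1 : (0:ℝ) < 1 + w := by linarith
  have := Real.log_lt_sub_one_of_pos h1 (by intro h; apply hw0; linarith)
  unfold erlPsi; linarith

lemma hasDerivAt_erlPsi {w : ℝ} (hw : -1 < w) : HasDerivAt erlPsi (w / (1 + w)) w := by
  have h1 : (1:ℝ) + w ≠ 0 := by intro h; linarith [h]
  have h1' : (0:ℝ) < 1 + w := by linarith
  have hlog : HasDerivAt (fun x : ℝ => Real.log (1 + x)) (1 / (1 + w)) w := by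
    simpa using ((hasDerivAt_id w).const_add 1).log h1
  have := (hasDerivAt_id w).sub hlog
  exact this.congr_deriv (by field_simp; ring)

noncomputable def erlF (w : ℝ) : ℝ := w - Real.log (1 + w) - 9 * w ^ 2 / (2 * (3 + w) ^ 2)

lemma hasDerivAt_erlF {w : ℝ} (hw : -1 < w) :
    HasDerivAt erlF (w ^ 3 * (9 + w) / ((3 + w) ^ 3 * (1 + w))) w := by
  have h1 : (1:ℝ) + w ≠ 0 := by intro h; linarith [h]
  have h3 : (3:ℝ) + w ≠ 0 := by intro h; linarith [h]
  have h3' : (2:ℝ) * (3 + w) ^ 2 ≠ 0 := by positivity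
  have hlog : HasDerivAt (fun x : ℝ => Real.log (1 + x)) (1 / (1 + w)) w := by
    simpa using ((hasDerivAt_id w).const_add 1).log h1
  have hnum : HasDerivAt (fun x : ℝ => 9 * x ^ 2) (9 * (2 * w)) w := by
    simpa using ((hasDerivAt_pow 2 w)).const_mul 9
  have hden : HasDerivAt (fun x : ℝ => 2 * (3 + x) ^ 2) (2 * (2 * (3 + w))) w := by
    have : HasDerivAt (fun x : ℝ => (3 + x) ^ 2) (2 * (3 + w) ^ 1 * 1) w :=
      (((hasDerivAt_id w).const_add 3).pow 2)
    simpa using this.const_mul 2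
  have hdiv := hnum.div hden h3'
  have := ((hasDerivAt_id w).sub hlog).sub hdiv
  exact this.congr_deriv (by field_simp; ring)

lemma erlF_nonneg {w : ℝ} (hw : -1 < w) : 0 ≤ erlF w := by
  have hcont : ∀ x ∈ Ioi (-1 : ℝ), ContinuousAt erlF x := fun x hx =>
    (hasDerivAt_erlF hx).continuousAt
  have key : ∀ x ∈ Ioi (-1:ℝ), 0 ≤ x → 0 ≤ deriv erlF x := by
    intro x hx hx0
    rw [(hasDerivAt_erlF hx).deriv]
    have : (0:ℝ) < 3 + x := by linarith [hx.out]
    positivity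
  have hF0 : erlF 0 = 0 := by simp [erlF]
  rcases le_or_gt 0 w with h | h
  · -- monotone on [0, ∞)
    have hm : MonotoneOn erlF (Ici (0:ℝ)) := by
      apply monotoneOn_of_deriv_nonneg (convex_Ici 0)
      · intro x hx
        exact ((hasDerivAt_erlF (by simp at hx ⊢; linarith [hx] : (-1:ℝ) < x)).continuousAt).continuousWithinAt
      · intro x hx
        simp only [interior_Ici, mem_Ioi] at hx
        exact ((hasDerivAt_erlF (by linarith)).differentiableAt).differentiableWithinAt
      · intro x hx
        simp only [interior_Ici, mem_Ioi] at hx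
        exact key x (by simp; linarith) hx.le
    have := hm (self_mem_Ici) (by exact h) h
    rwa [hF0] at this
  · -- antitone on (-1, 0]
    have key' : ∀ x ∈ Ioo (-1:ℝ) 0, deriv erlF x ≤ 0 := by
      intro x hx
      rw [(hasDerivAt_erlF hx.1).deriv]
      have h3 : (0:ℝ) < 3 + x := by linarith [hx.1]
      have h1 : (0:ℝ) < 1 + x := by linarith [hx.1]
      have hx3 : x ^ 3 ≤ 0 := by nlinarith [sq_nonneg x, hx.2.le]
      have h9 : (0:ℝ) < 9 + x := by linarith [hx.1]
      have : x ^ 3 * (9 + x) ≤ 0 := mul_nonpos_of_nonpos_of_nonneg hx3 h9.le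
      exact div_nonpos_of_nonpos_of_nonneg this (by positivity)
    have ha : AntitoneOn erlF (Icc w 0) := by
      apply antitoneOn_of_deriv_nonpos (convex_Icc w 0)
      · intro x hx
        exact ((hasDerivAt_erlF (by rcases hx with ⟨h1,h2⟩; linarith)).continuousAt).continuousWithinAt
      · intro x hx
        rw [interior_Icc] at hx
        exact ((hasDerivAt_erlF (by linarith [hx.1])).differentiableAt).differentiableWithinAt
      · intro x hx
        rw [interior_Icc] at hx
        exact key' x ⟨by linarith [hx.1], hx.2⟩
    have := ha (left_mem_Icc.2 h.le) (right_mem_Icc.2 h.le) h.le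
    rwa [hF0] at this

lemma erl_key_ineq {w : ℝ} (hw : -1 < w) : 9 * w ^ 2 ≤ 2 * erlPsi w * (3 + w) ^ 2 := by
  have h := erlF_nonneg hw
  have h3w : (0:ℝ) < 3 + w := by linarith
  have h3 : (0:ℝ) < 2 * (3 + w) ^ 2 := by positivity
  unfold erlF at h
  unfold erlPsi
  rw [sub_nonneg, div_le_iff₀ h3] at h
  nlinarith [h]

lemma erl_key_sqrt {w : ℝ} (hw : -1 < w) :
    3 * |w| ≤ Real.sqrt (2 * erlPsi w) * (3 + w) := by
  have h3 : (0:ℝ) < 3 + w := by linarith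
  have h := erl_key_ineq hw
  have h2 : Real.sqrt (9 * w ^ 2) ≤ Real.sqrt (2 * erlPsi w * (3 + w) ^ 2) :=
    Real.sqrt_le_sqrt h
  have e1 : Real.sqrt (9 * w ^ 2) = 3 * |w| := by
    rw [show (9:ℝ) * w ^ 2 = (3 * |w|) ^ 2 by rw [mul_pow, sq_abs]; ring]
    exact Real.sqrt_sq (by positivity)
  have e2 : Real.sqrt (2 * erlPsi w * (3 + w) ^ 2)
      = Real.sqrt (2 * erlPsi w) * (3 + w) := by
    rw [Real.sqrt_mul (mul_nonneg (by norm_num) (erlPsi_nonneg hw))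
      , Real.sqrt_sq h3.le]
  rwa [e1, e2] at h2



lemma erlPsi_strictMonoOn : StrictMonoOn erlPsi (Ici (0:ℝ)) := by
  apply strictMonoOn_of_deriv_pos (convex_Ici 0)
  · intro x hx
    exact (hasDerivAt_erlPsi (by simp at hx; linarith : (-1:ℝ) < x)).continuousAt.continuousWithinAt
  · intro x hx
    rw [interior_Ici] at hx
    rw [(hasDerivAt_erlPsi (by linarith [hx.out] : (-1:ℝ) < x)).deriv]
    have h1 : (0:ℝ) < 1 + x := by linarith [hx.out]
    exact div_pos hx.out h1

lemma erlPsi_strictAntiOn : StrictAntiOn erlPsi (Ioc (-1:ℝ) 0) := by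
  apply strictAntiOn_of_deriv_neg (convex_Ioc (-1) 0)
  · intro x hx
    exact (hasDerivAt_erlPsi hx.1).continuousAt.continuousWithinAt
  · intro x hx
    rw [interior_Ioc] at hx
    rw [(hasDerivAt_erlPsi hx.1).deriv]
    have h1 : (0:ℝ) < 1 + x := by linarith [hx.1]
    exact div_neg_of_neg_of_pos hx.2 h1

lemma erlPsi_large (T : ℝ) : ∃ w : ℝ, 0 ≤ w ∧ T ≤ erlPsi w := by
  set k : ℝ := 2 * Real.sqrt (max T 0) with hk
  have hk0 : 0 ≤ k := by positivity
  refine ⟨Real.exp k - 1, by nlinarith [Real.add_one_le_exp k], ?_⟩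
  have h1w : 1 + (Real.exp k - 1) = Real.exp k := by ring
  have hlog : Real.log (1 + (Real.exp k - 1)) = k := by rw [h1w, Real.log_exp]
  have he : 1 + k / 2 ≤ Real.exp (k / 2) := by linarith [Real.add_one_le_exp (k/2)]
  have h2 : (1 + k/2) * (1 + k/2) ≤ Real.exp (k/2) * Real.exp (k/2) :=
    mul_le_mul he he (by positivity) (Real.exp_pos _).le
  have h3 : Real.exp (k/2) * Real.exp (k/2) = Real.exp k := by
    rw [← Real.exp_add]; ring_nf
  have hsq : Real.sqrt (max T 0) ^ 2 = max T 0 := Real.sq_sqrt (le_max_right T 0)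
  have hT : T ≤ k ^ 2 / 4 := by
    have : k ^ 2 / 4 = max T 0 := by rw [hk]; nlinarith [hsq]
    rw [this]; exact le_max_left T 0
  unfold erlPsi
  rw [hlog]
  nlinarith [h2, h3]

lemma erl_decay (lam c : ℝ) (hl : 0 < lam) :
    Tendsto (fun t : ℝ => (1 + t) ^ c * Real.exp (-lam * (1 + t))) atTop (𝓝 0) := by
  have h := tendsto_rpow_mul_exp_neg_mul_atTop_nhds_zero c lam hl
  exact h.comp (tendsto_atTop_add_const_left atTop 1 tendsto_id)

lemma erl_tendsto_zero (lam c : ℝ) (hl : 0 < lam) :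
    Tendsto (fun t : ℝ => Real.exp (-lam * t) * (1 + t) ^ c) atTop (𝓝 0) := by
  have h := (erl_decay lam c hl).const_mul (Real.exp lam)
  rw [mul_zero] at h
  apply h.congr
  intro t
  rw [mul_comm (Real.exp (-lam * t)), mul_comm (Real.exp lam), mul_assoc, ← Real.exp_add]
  congr 2
  ring

lemma erl_integrableOn (lam c : ℝ) (hl : 0 < lam) :
    IntegrableOn (fun t => Real.exp (-lam * t) * (1 + t) ^ c) (Ioi (0:ℝ)) := by
  apply integrable_of_isBigO_exp_neg (b := lam / 2) (by linarith)
  · intro t ht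
    have h1 : (1:ℝ) + t ≠ 0 := by simp at ht; intro h; linarith
    exact (((Real.continuous_exp.comp (continuous_const.mul continuous_id)).continuousAt).mul
      (((continuous_const.add continuous_id).continuousAt).rpow_const (Or.inl h1))).continuousWithinAt
  · have h' := erl_decay (lam/2) c (by linarith)
    have h1 : (fun t : ℝ => (1 + t) ^ c * Real.exp (-(lam/2) * (1 + t)))
        =O[atTop] (fun _ : ℝ => (1:ℝ)) := h'.isBigO_one ℝ
    have h2 := (h1.mul (Asymptotics.isBigO_refl (fun t : ℝ => Real.exp (-(lam/2) * t)) atTop)).const_mul_left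
      (Real.exp (lam/2))
    simp only [one_mul] at h2
    apply h2.congr_left
    intro t
    rw [show Real.exp (-lam*t) = Real.exp (lam/2) *
        (Real.exp (-(lam/2)*(1+t)) * Real.exp (-(lam/2)*t)) from by
      rw [← Real.exp_add, ← Real.exp_add]; congr 1; ring]
    ring


lemma gauss_integrable : Integrable (fun y : ℝ => Real.exp (-y^2/2)) := by
  have h := integrable_exp_neg_mul_sq (show (0:ℝ) < 1/2 by norm_num)
  simp only [show ∀ y : ℝ, -(1/2) * y^2 = -y^2/2 from fun y => by ring] at h
  exact h

lemma gauss_mul_integrable : Integrable (fun y : ℝ => y * Real.exp (-y^2/2)) := by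
  have h := integrable_mul_exp_neg_mul_sq (show (0:ℝ) < 1/2 by norm_num)
  simp only [show ∀ y : ℝ, -(1/2) * y^2 = -y^2/2 from fun y => by ring] at h
  exact h

lemma gaussG_integrable (c : ℝ) :
    Integrable (fun y : ℝ => Real.exp (-y^2/2) * (1 - y * c)) := by
  have h := gauss_integrable.sub (gauss_mul_integrable.mul_const c)
  apply h.congr
  filter_upwards with y
  simp only [Pi.sub_apply]
  ring

lemma int_Ioi_gauss (a : ℝ) :
    ∫ y in Ioi (-a), Real.exp (-y^2/2) = ∫ y in Iic a, Real.exp (-y^2/2) := by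
  have := integral_comp_neg_Ioi (-a) (fun y => Real.exp (-y^2/2))
  simpa [neg_neg, neg_sq] using this

lemma int_Ioi_mul_gauss (a : ℝ) :
    ∫ y in Ioi (-a), y * Real.exp (-y^2/2) = Real.exp (-a^2/2) := by
  have hd : ∀ y ∈ Ici (-a), HasDerivAt (fun y : ℝ => -Real.exp (-y^2/2))
      (y * Real.exp (-y^2/2)) y := by
    intro y _
    have h1 : HasDerivAt (fun y : ℝ => -y^2/2) (-y) y := by
      have := ((hasDerivAt_pow 2 y).neg.div_const 2)
      exact this.congr_deriv (by norm_num; ring)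
    have := (h1.exp).neg
    exact this.congr_deriv (by ring)
  have hint : IntegrableOn (fun y : ℝ => y * Real.exp (-y^2/2)) (Ioi (-a)) :=
    gauss_mul_integrable.integrableOn
  have hsq : Tendsto (fun y : ℝ => y^2/2) atTop atTop :=
    (tendsto_pow_atTop two_ne_zero).atTop_div_const (by norm_num)
  have htend : Tendsto (fun y : ℝ => -Real.exp (-y^2/2)) atTop (𝓝 0) := by
    have h0 : Tendsto (fun y : ℝ => Real.exp (-(y^2/2))) atTop (𝓝 0) :=
      Real.tendsto_exp_neg_atTop_nhds_zero.comp hsq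
    simp only [show ∀ y : ℝ, -(y^2/2) = -y^2/2 from fun y => by ring] at h0
    simpa using h0.neg
  have h := integral_Ioi_of_hasDerivAt_of_tendsto' hd hint htend
  rw [h]
  simp [neg_sq]




lemma erlPsi_zero : erlPsi 0 = 0 := by simp [erlPsi]

noncomputable def erlV (s ρ t : ℝ) : ℝ := 2 * s * erlPsi (ρ * (1 + t) - 1)
noncomputable def erlY (s ρ t : ℝ) : ℝ := Real.sqrt (erlV s ρ t)
noncomputable def erlYd (s ρ t : ℝ) : ℝ := s * (ρ * (1 + t) - 1) / ((1 + t) * erlY s ρ t)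

variable {s ρ : ℝ}

lemma erl_w_gt (hρ0 : 0 < ρ) {t : ℝ} (ht : -1 < t) : -1 < ρ * (1 + t) - 1 := by
  have h1 : (0:ℝ) < 1 + t := by linarith
  nlinarith

lemma erlV_nonneg (hs : 0 < s) (hρ0 : 0 < ρ) {t : ℝ} (ht : -1 < t) : 0 ≤ erlV s ρ t := by
  have := erlPsi_nonneg (erl_w_gt hρ0 ht)
  unfold erlV; nlinarith

lemma erlV_pos (hs : 0 < s) (hρ0 : 0 < ρ) {t : ℝ} (ht : -1 < t)
    (hw : ρ * (1 + t) - 1 ≠ 0) : 0 < erlV s ρ t := by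
  have := erlPsi_pos (erl_w_gt hρ0 ht) hw
  unfold erlV; nlinarith

lemma erlY_pos (hs : 0 < s) (hρ0 : 0 < ρ) {t : ℝ} (ht : -1 < t)
    (hw : ρ * (1 + t) - 1 ≠ 0) : 0 < erlY s ρ t :=
  Real.sqrt_pos.2 (erlV_pos hs hρ0 ht hw)

lemma erlY_sq (hs : 0 < s) (hρ0 : 0 < ρ) {t : ℝ} (ht : -1 < t) :
    (erlY s ρ t) ^ 2 = erlV s ρ t :=
  Real.sq_sqrt (erlV_nonneg hs hρ0 ht)

lemma erlY_continuousAt (hρ0 : 0 < ρ) {t : ℝ} (ht : -1 < t) :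
    ContinuousAt (erlY s ρ) t := by
  have h1 : (0:ℝ) < ρ * (1 + t) := by nlinarith
  apply Real.continuous_sqrt.continuousAt.comp
  unfold erlV erlPsi
  apply ContinuousAt.mul continuousAt_const
  apply ContinuousAt.sub
  · fun_prop
  · apply ContinuousAt.log
    · fun_prop
    · intro h; rw [show (1:ℝ) + (ρ * (1+t) - 1) = ρ * (1+t) by ring] at h; linarith

lemma erlY_hasDerivAt (hs : 0 < s) (hρ0 : 0 < ρ) {t : ℝ} (ht : -1 < t)
    (hw : ρ * (1 + t) - 1 ≠ 0) :
    HasDerivAt (erlY s ρ) (erlYd s ρ t) t := by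
  have h1t : (0:ℝ) < 1 + t := by linarith
  have hwgt := erl_w_gt hρ0 ht
  have h1w : (0:ℝ) < ρ * (1 + t) := by nlinarith
  have hw' : HasDerivAt (fun t : ℝ => ρ * (1 + t) - 1) ρ t := by
    simpa using (((hasDerivAt_id t).const_add 1).const_mul ρ).sub_const 1
  have hψ := (hasDerivAt_erlPsi hwgt).comp t hw'
  have hV : HasDerivAt (erlV s ρ)
      (2 * s * ((ρ * (1 + t) - 1) / (1 + (ρ * (1 + t) - 1)) * ρ)) t := by
    unfold erlV
    exact hψ.const_mul (2 * s)
  have hVne : erlV s ρ t ≠ 0 := (erlV_pos hs hρ0 ht hw).ne'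
  have h2 := hV.sqrt hVne
  have hY := erlY_pos hs hρ0 ht hw
  unfold erlY at h2 hY ⊢
  unfold erlYd
  convert h2 using 1
  rw [show (1:ℝ) + (ρ * (1 + t) - 1) = ρ * (1 + t) by ring]
  unfold erlY
  field_simp

lemma erlY_strictMonoOn (hs : 0 < s) (hρ0 : 0 < ρ) (hρ1 : ρ < 1) :
    StrictMonoOn (erlY s ρ) (Ici ((1 - ρ)/ρ)) := by
  have ht₀ : (0:ℝ) ≤ (1 - ρ)/ρ := div_nonneg (by linarith) hρ0.le
  intro a ha b hb hab
  have ha' := ha.out; have hb' := hb.out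
  rw [div_le_iff₀ hρ0] at ha' hb'
  have hwa : 0 ≤ ρ * (1 + a) - 1 := by nlinarith
  have hwb : 0 ≤ ρ * (1 + b) - 1 := by nlinarith
  have hψ := erlPsi_strictMonoOn hwa hwb (by nlinarith)
  have h1a : (-1:ℝ) < a := by linarith [ha.out]
  apply Real.sqrt_lt_sqrt (erlV_nonneg hs hρ0 h1a)
  unfold erlV; nlinarith

lemma erlY_strictAntiOn (hs : 0 < s) (hρ0 : 0 < ρ) (hρ1 : ρ < 1) :
    StrictAntiOn (erlY s ρ) (Icc 0 ((1 - ρ)/ρ)) := by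
  intro a ha b hb hab
  have ha1 := ha.1; have ha2 := ha.2; have hb1 := hb.1; have hb2 := hb.2
  rw [le_div_iff₀ hρ0] at hb2
  have hwa : ρ * (1 + a) - 1 ∈ Ioc (-1:ℝ) 0 := by
    constructor
    · exact erl_w_gt hρ0 (by linarith)
    · nlinarith [ha.2, (le_div_iff₀ hρ0).1 ha.2]
  have hwb : ρ * (1 + b) - 1 ∈ Ioc (-1:ℝ) 0 := by
    constructor
    · exact erl_w_gt hρ0 (by linarith)
    · nlinarith
  have hψ := erlPsi_strictAntiOn hwa hwb (by nlinarith)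
  apply Real.sqrt_lt_sqrt (erlV_nonneg hs hρ0 (by linarith : (-1:ℝ) < b))
  unfold erlV; nlinarith

lemma erlY_at_crit (hs : 0 < s) (hρ0 : 0 < ρ) : erlY s ρ ((1 - ρ)/ρ) = 0 := by
  unfold erlY erlV
  rw [show ρ * (1 + (1 - ρ)/ρ) - 1 = 0 by (field_simp; ring), erlPsi_zero]
  simp

lemma erlY_image_Ioi (hs : 0 < s) (hρ0 : 0 < ρ) (hρ1 : ρ < 1) :
    erlY s ρ '' Ioi ((1 - ρ)/ρ) = Ioi (0:ℝ) := by
  set t₀ : ℝ := (1 - ρ)/ρ with ht₀def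
  have ht₀ : (0:ℝ) ≤ t₀ := div_nonneg (by linarith) hρ0.le
  apply Subset.antisymm
  · rintro y ⟨t, ht, rfl⟩
    have ht' : t₀ < t := ht
    have h1t : (-1:ℝ) < t := by linarith
    have hw : ρ * (1 + t) - 1 ≠ 0 := by
      have : t₀ < t := ht
      rw [ht₀def] at this
      rw [div_lt_iff₀ hρ0] at this
      intro h; nlinarith
    exact erlY_pos hs hρ0 h1t hw
  · rintro c (hc : 0 < c)
    obtain ⟨w₀, hw₀0, hw₀⟩ := erlPsi_large (c^2/(2*s) + 1)
    set b : ℝ := max ((1 + w₀)/ρ - 1) (t₀ + 1) with hbdef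
    have hbt₀ : t₀ < b := lt_of_lt_of_le (by linarith) (le_max_right _ _)
    have hwb : w₀ ≤ ρ * (1 + b) - 1 := by
      have h1 : (1 + w₀)/ρ - 1 ≤ b := le_max_left _ _
      have h2 : (1 + w₀)/ρ ≤ 1 + b := by linarith
      rw [div_le_iff₀ hρ0] at h2
      nlinarith
    have hwb0 : 0 ≤ ρ * (1 + b) - 1 := le_trans hw₀0 hwb
    have hψb : c^2/(2*s) + 1 ≤ erlPsi (ρ * (1 + b) - 1) := by
      rcases eq_or_lt_of_le hwb with h | h
      · rwa [← h]
      · exact le_trans hw₀ (erlPsi_strictMonoOn hw₀0 hwb0 h).le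
    have hYb : c < erlY s ρ b := by
      rw [erlY, show c = Real.sqrt (c^2) from (Real.sqrt_sq hc.le).symm]
      apply Real.sqrt_lt_sqrt (by positivity)
      unfold erlV
      have h2s : (0:ℝ) < 2*s := by linarith
      calc c^2 < 2*s*(c^2/(2*s) + 1) := by field_simp; nlinarith
        _ ≤ 2*s*erlPsi (ρ * (1 + b) - 1) := by nlinarith
    have hcont : ContinuousOn (erlY s ρ) (Icc t₀ b) := by
      intro x hx
      exact (erlY_continuousAt hρ0 (by linarith [hx.1] : (-1:ℝ) < x)).continuousWithinAt
    have := intermediate_value_Ioo hbt₀.le hcont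
    rw [erlY_at_crit hs hρ0] at this
    have hc' : c ∈ Ioo (0:ℝ) (erlY s ρ b) := ⟨hc, hYb⟩
    obtain ⟨t, ht, hty⟩ := this hc'
    exact ⟨t, ht.1, hty⟩

lemma erlY_image_Ioo (hs : 0 < s) (hρ0 : 0 < ρ) (hρ1 : ρ < 1) :
    (fun t => -erlY s ρ t) '' Ioo 0 ((1 - ρ)/ρ) = Ioo (-erlY s ρ 0) 0 := by
  set t₀ : ℝ := (1 - ρ)/ρ with ht₀def
  have ht₀ : (0:ℝ) < t₀ := div_pos (by linarith) hρ0
  have hanti := erlY_strictAntiOn hs hρ0 hρ1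
  apply Subset.antisymm
  · rintro y ⟨t, ht, rfl⟩
    constructor
    · simp only [neg_lt_neg_iff]
      exact hanti ⟨le_refl 0, ht₀.le⟩ ⟨ht.1.le, ht.2.le⟩ ht.1
    · simp only [neg_neg, Left.neg_neg_iff]
      have hw : ρ * (1 + t) - 1 ≠ 0 := by
        have h2 := ht.2
        rw [ht₀def, lt_div_iff₀ hρ0] at h2
        intro h; nlinarith
      exact erlY_pos hs hρ0 (by linarith [ht.1] : (-1:ℝ) < t) hw
  · have hcont : ContinuousOn (fun t => -erlY s ρ t) (Icc 0 t₀) := by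
      intro x hx
      exact ((erlY_continuousAt hρ0 (by linarith [hx.1] : (-1:ℝ) < x)).neg).continuousWithinAt
    have := intermediate_value_Ioo ht₀.le hcont
    simp only [ht₀def, erlY_at_crit hs hρ0, neg_zero] at this
    exact this





lemma erlY_eq_sqrt_mul (hs : 0 < s) (t : ℝ) :
    erlY s ρ t = Real.sqrt s * Real.sqrt (2 * erlPsi (ρ * (1 + t) - 1)) := by
  unfold erlY erlV
  rw [show 2 * s * erlPsi (ρ * (1 + t) - 1) = s * (2 * erlPsi (ρ * (1 + t) - 1)) by ring,
    Real.sqrt_mul hs.le]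

lemma erl_exp_id (hs : 0 < s) (hρ0 : 0 < ρ) {t : ℝ} (ht : -1 < t) :
    Real.exp (-(erlY s ρ t)^2/2) = Real.exp (s - s*ρ*(1+t)) * (ρ*(1+t)) ^ s := by
  rw [erlY_sq hs hρ0 ht]
  unfold erlV erlPsi
  have h1 : (0:ℝ) < ρ*(1+t) := by nlinarith
  rw [show (1:ℝ) + (ρ*(1+t)-1) = ρ*(1+t) by ring]
  rw [Real.rpow_def_of_pos h1, ← Real.exp_add]
  congr 1; ring

lemma erl_bound_p (hs : 0 < s) (hρ0 : 0 < ρ) {t : ℝ} (ht : -1 < t)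
    (hw : 0 < ρ * (1 + t) - 1) :
    |erlYd s ρ t| * (Real.exp (-(erlY s ρ t)^2/2) *
        (1 - erlY s ρ t * (1/(3*Real.sqrt s)))) ≤
      Real.sqrt s / (1 + t) * Real.exp (-(erlY s ρ t)^2/2) := by
  have h1t : (0:ℝ) < 1 + t := by linarith
  set w : ℝ := ρ * (1 + t) - 1 with hwdef
  have hwgt : (-1:ℝ) < w := by linarith
  set x : ℝ := Real.sqrt (2 * erlPsi w) with hxdef
  have hxpos : 0 < x := Real.sqrt_pos.2 (by nlinarith [erlPsi_pos hwgt hw.ne'])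
  have hY : erlY s ρ t = Real.sqrt s * x := erlY_eq_sqrt_mul hs t
  have hsp : 0 < Real.sqrt s := Real.sqrt_pos.2 hs
  have hss : Real.sqrt s * Real.sqrt s = s := Real.mul_self_sqrt hs.le
  have hkey : 3 * w ≤ x * (3 + w) := by
    have := erl_key_sqrt hwgt
    rwa [abs_of_pos hw, ← hxdef] at this
  have hE : 0 ≤ Real.exp (-(erlY s ρ t)^2/2) := (Real.exp_pos _).le
  clear_value w x
  have habs : |erlYd s ρ t| = s * w / ((1 + t) * (Real.sqrt s * x)) := by
    unfold erlYd
    rw [← hwdef, hY, abs_of_pos]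
    positivity
  have hcoef : s * w / ((1 + t) * (Real.sqrt s * x)) *
      (1 - Real.sqrt s * x * (1/(3*Real.sqrt s))) ≤ Real.sqrt s / (1 + t) := by
    rw [div_mul_eq_mul_div, div_le_div_iff₀ (by positivity) h1t]
    have h3 : Real.sqrt s * x * (1/(3*Real.sqrt s)) = x / 3 := by
      field_simp
    rw [h3, show Real.sqrt s * ((1+t)*(Real.sqrt s * x)) = s * (x*(1+t)) from by
      rw [show Real.sqrt s * ((1+t)*(Real.sqrt s * x))
        = (Real.sqrt s * Real.sqrt s) * (x*(1+t)) by ring, hss]]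
    have h4 : 0 ≤ s*(1+t) * (x*(3+w) - 3*w) :=
      mul_nonneg (mul_pos hs h1t).le (by linarith)
    have h5 : s*(x*(1+t)) - s*w*(1-x/3)*(1+t) = s*(1+t) * (x*(3+w) - 3*w) / 3 := by ring
    linarith [h4, h5]
  calc |erlYd s ρ t| * (Real.exp (-(erlY s ρ t)^2/2) *
        (1 - erlY s ρ t * (1/(3*Real.sqrt s))))
      = (|erlYd s ρ t| * (1 - erlY s ρ t * (1/(3*Real.sqrt s)))) *
        Real.exp (-(erlY s ρ t)^2/2) := by ring
    _ ≤ (Real.sqrt s / (1 + t)) * Real.exp (-(erlY s ρ t)^2/2) := by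
        apply mul_le_mul_of_nonneg_right _ hE
        rw [habs, hY]
        exact hcoef

lemma erl_bound_m (hs : 0 < s) (hρ0 : 0 < ρ) {t : ℝ} (ht : -1 < t)
    (hw : ρ * (1 + t) - 1 < 0) :
    |(-erlYd s ρ t)| * (Real.exp (-(-erlY s ρ t)^2/2) *
        (1 - (-erlY s ρ t) * (1/(3*Real.sqrt s)))) ≤
      Real.sqrt s / (1 + t) * Real.exp (-(erlY s ρ t)^2/2) := by
  have h1t : (0:ℝ) < 1 + t := by linarith
  set w : ℝ := ρ * (1 + t) - 1 with hwdef
  have hwgt : (-1:ℝ) < w := erl_w_gt hρ0 ht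
  set x : ℝ := Real.sqrt (2 * erlPsi w) with hxdef
  have hxpos : 0 < x := Real.sqrt_pos.2 (by nlinarith [erlPsi_pos hwgt hw.ne])
  have hY : erlY s ρ t = Real.sqrt s * x := erlY_eq_sqrt_mul hs t
  have hsp : 0 < Real.sqrt s := Real.sqrt_pos.2 hs
  have hss : Real.sqrt s * Real.sqrt s = s := Real.mul_self_sqrt hs.le
  have hkey : 3 * (-w) ≤ x * (3 + w) := by
    have := erl_key_sqrt hwgt
    rwa [abs_of_neg hw, ← hxdef] at this
  have hEsq : (-erlY s ρ t)^2 = (erlY s ρ t)^2 := by ring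
  rw [hEsq]
  have hE : 0 ≤ Real.exp (-(erlY s ρ t)^2/2) := (Real.exp_pos _).le
  clear_value w x
  have habs : |(-erlYd s ρ t)| = s * (-w) / ((1 + t) * (Real.sqrt s * x)) := by
    unfold erlYd
    rw [← hwdef, hY, abs_neg, abs_of_neg (show s * w / ((1 + t) * (Real.sqrt s * x)) < 0 from
      div_neg_of_neg_of_pos (by nlinarith) (by positivity))]
    ring
  have hcoef : s * (-w) / ((1 + t) * (Real.sqrt s * x)) *
      (1 - (-(Real.sqrt s * x)) * (1/(3*Real.sqrt s))) ≤ Real.sqrt s / (1 + t) := by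
    rw [div_mul_eq_mul_div, div_le_div_iff₀ (by positivity) h1t]
    have h3 : -(Real.sqrt s * x) * (1/(3*Real.sqrt s)) = -(x / 3) := by
      field_simp
    rw [h3, show Real.sqrt s * ((1+t)*(Real.sqrt s * x)) = s * (x*(1+t)) from by
      rw [show Real.sqrt s * ((1+t)*(Real.sqrt s * x))
        = (Real.sqrt s * Real.sqrt s) * (x*(1+t)) by ring, hss]]
    have h4 : 0 ≤ s*(1+t) * (x*(3+w) - 3*(-w)) :=
      mul_nonneg (mul_pos hs h1t).le (by linarith)
    have h5 : s*(x*(1+t)) - s*(-w)*(1 - -(x/3))*(1+t)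
        = s*(1+t) * (x*(3+w) - 3*(-w)) / 3 := by ring
    linarith [h4, h5]
  calc |(-erlYd s ρ t)| * (Real.exp (-(erlY s ρ t)^2/2) *
        (1 - (-erlY s ρ t) * (1/(3*Real.sqrt s))))
      = (|(-erlYd s ρ t)| * (1 - (-erlY s ρ t) * (1/(3*Real.sqrt s)))) *
        Real.exp (-(erlY s ρ t)^2/2) := by ring
    _ ≤ (Real.sqrt s / (1 + t)) * Real.exp (-(erlY s ρ t)^2/2) := by
        apply mul_le_mul_of_nonneg_right _ hE
        rw [habs, hY]
        exact hcoef


/-- Upper bound on the (extended) Erlang C formula. -/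
theorem erlangCExt_upper_bound (s lam : ℝ) (h0 : 0 < lam) (hlt : lam < s)
    (ρ α γ : ℝ) (hρ : ρ = lam / s)
    (hα : α = Real.sqrt (-2 * s * (1 - ρ + Real.log ρ)))
    (hγ : γ = (1 - ρ) * Real.sqrt s) :
    erlangCExt s lam ≤
      (ρ + γ * (stdGaussianCDF α / stdGaussianPDF α + (2 / 3) * (1 / Real.sqrt s)))⁻¹ := by
  
  have hs : 0 < s := h0.trans hlt
  have hsp : 0 < Real.sqrt s := Real.sqrt_pos.2 hs
  have hρ0 : 0 < ρ := by rw [hρ]; positivity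
  have hρ1 : ρ < 1 := by rw [hρ]; exact (div_lt_one hs).2 hlt
  have hlam : lam = ρ * s := by rw [hρ]; field_simp
  set t₀ : ℝ := (1 - ρ)/ρ with ht₀def
  have ht₀0 : 0 < t₀ := div_pos (by linarith) hρ0
  have hρt₀ : ρ * (1 + t₀) = 1 := by rw [ht₀def]; field_simp; ring
  -- integrability of basic pieces
  have hintA := erl_integrableOn lam (s-1) h0
  have hintB := erl_integrableOn lam s h0
  set A : ℝ := ∫ t in Ioi (0:ℝ), Real.exp (-lam*t) * (1+t)^(s-1) with hAdef
  set B : ℝ := ∫ t in Ioi (0:ℝ), Real.exp (-lam*t) * (1+t)^s with hBdef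
  -- Step 1: integration by parts / FTC identity
  have hderiv : ∀ t ∈ Ici (0:ℝ), HasDerivAt (fun t => Real.exp (-lam*t) * (1+t)^s)
      (s * (Real.exp (-lam*t) * (1+t)^(s-1)) - lam * (Real.exp (-lam*t) * (1+t)^s)) t := by
    intro t ht
    have h1t : (0:ℝ) < 1 + t := by have := ht.out; linarith
    have he : HasDerivAt (fun t : ℝ => Real.exp (-lam*t)) (Real.exp (-lam*t) * -lam) t := by
      simpa using (((hasDerivAt_id t).const_mul (-lam)).exp)
    have hp : HasDerivAt (fun t : ℝ => (1+t)^s) (s * (1+t)^(s-1)) t := by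
      have h := Real.hasDerivAt_rpow_const (x := 1+t) (p := s) (Or.inl h1t.ne')
      simpa [Function.comp_def] using h.comp t ((hasDerivAt_id t).const_add 1)
    have := he.mul hp
    exact this.congr_deriv (by ring)
  have hFTCint : IntegrableOn (fun t => s * (Real.exp (-lam*t) * (1+t)^(s-1))
      - lam * (Real.exp (-lam*t) * (1+t)^s)) (Ioi (0:ℝ)) :=
    (hintA.const_mul s).sub (hintB.const_mul lam)
  have htend := erl_tendsto_zero lam s h0
  have hFTC := integral_Ioi_of_hasDerivAt_of_tendsto' hderiv hFTCint htend
  have hsplit : s * A - lam * B = -1 := by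
    rw [hAdef, hBdef, ← integral_const_mul, ← integral_const_mul,
      ← integral_sub (hintA.const_mul s) (hintB.const_mul lam)]
    rw [hFTC]
    norm_num
  have hIeq : ∫ t in Ioi (0:ℝ), t * Real.exp (-lam*t) * (1+t)^(s-1) = B - A := by
    rw [hBdef, hAdef, ← integral_sub hintB hintA]
    apply setIntegral_congr_fun measurableSet_Ioi
    intro t ht
    have h1t : (0:ℝ) < 1 + t := by have := ht.out; linarith
    have hpow : (1+t)^s = (1+t)^(s-1) * (1+t) := by
      rw [← Real.rpow_add_one h1t.ne' (s-1)]
      norm_num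
    simp only []
    rw [hpow]
    ring
  have hlamI : lam * (∫ t in Ioi (0:ℝ), t * Real.exp (-lam*t) * (1+t)^(s-1))
      = 1 + (s - lam) * A := by
    rw [hIeq]
    linarith [hsplit]
  -- Gaussian side
  set c : ℝ := 1/(3*Real.sqrt s) with hcdef
  set G : ℝ → ℝ := fun y => Real.exp (-y^2/2) * (1 - y * c) with hGdef
  have hGint : Integrable G := gaussG_integrable c
  have hα0 : 0 ≤ α := by rw [hα]; exact Real.sqrt_nonneg _
  have hXnn : 0 ≤ -2*s*(1-ρ+Real.log ρ) := by
    have h := erlPsi_nonneg (show (-1:ℝ) < ρ - 1 by linarith)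
    unfold erlPsi at h
    rw [show (1:ℝ)+(ρ-1) = ρ by ring] at h
    linarith [mul_nonneg (by linarith : (0:ℝ) ≤ 2*s) h]
  have hαsq : α^2 = -2*s*(1-ρ+Real.log ρ) := by
    rw [hα, Real.sq_sqrt hXnn]
  have hα' : erlY s ρ 0 = α := by
    rw [hα]
    unfold erlY erlV erlPsi
    rw [show ρ * (1 + 0) - 1 = ρ - 1 by ring, show (1:ℝ) + (ρ - 1) = ρ by ring]
    congr 1
    ring
  -- substitution, increasing branch
  have hdp : ∀ t ∈ Ioi t₀, HasDerivWithinAt (erlY s ρ) (erlYd s ρ t) (Ioi t₀) t := by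
    intro t ht
    have ht' : t₀ < t := ht
    have h1t : (-1:ℝ) < t := by linarith
    have hw : 0 < ρ*(1+t) - 1 := by
      linarith [mul_lt_mul_of_pos_left ht' hρ0, hρt₀]
    exact (erlY_hasDerivAt hs hρ0 h1t hw.ne').hasDerivWithinAt
  have hinjp : InjOn (erlY s ρ) (Ioi t₀) :=
    ((erlY_strictMonoOn hs hρ0 hρ1).injOn).mono Ioi_subset_Ici_self
  have hsubp : ∫ y in Ioi (0:ℝ), G y
      = ∫ t in Ioi t₀, |erlYd s ρ t| • G (erlY s ρ t) := by
    rw [← erlY_image_Ioi hs hρ0 hρ1]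
    exact integral_image_eq_integral_abs_deriv_smul measurableSet_Ioi hdp hinjp G
  have hintp : IntegrableOn (fun t => |erlYd s ρ t| • G (erlY s ρ t)) (Ioi t₀) := by
    refine (integrableOn_image_iff_integrableOn_abs_deriv_smul measurableSet_Ioi hdp hinjp G).1 ?_
    exact hGint.integrableOn
  -- substitution, decreasing branch
  have hdm : ∀ t ∈ Ioo (0:ℝ) t₀,
      HasDerivWithinAt (fun t => -erlY s ρ t) (-erlYd s ρ t) (Ioo (0:ℝ) t₀) t := by
    intro t ht
    have h1t : (-1:ℝ) < t := by linarith [ht.1]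
    have hw : ρ*(1+t) - 1 < 0 := by
      linarith [mul_lt_mul_of_pos_left ht.2 hρ0, hρt₀]
    exact ((erlY_hasDerivAt hs hρ0 h1t hw.ne).neg).hasDerivWithinAt
  have hinjm : InjOn (fun t => -erlY s ρ t) (Ioo (0:ℝ) t₀) := by
    intro a ha b hb hab
    exact (erlY_strictAntiOn hs hρ0 hρ1).injOn ⟨ha.1.le, ha.2.le⟩ ⟨hb.1.le, hb.2.le⟩
      (neg_inj.1 hab)
  have hsubm : ∫ y in Ioo (-α) (0:ℝ), G y
      = ∫ t in Ioo (0:ℝ) t₀, |(-erlYd s ρ t)| • G (-erlY s ρ t) := by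
    rw [show -α = -erlY s ρ 0 by rw [hα'], ← erlY_image_Ioo hs hρ0 hρ1]
    exact integral_image_eq_integral_abs_deriv_smul measurableSet_Ioo hdm hinjm G
  have hintm : IntegrableOn (fun t => |(-erlYd s ρ t)| • G (-erlY s ρ t)) (Ioo (0:ℝ) t₀) := by
    refine (integrableOn_image_iff_integrableOn_abs_deriv_smul measurableSet_Ioo hdm hinjm G).1 ?_
    exact hGint.integrableOn
  -- the dominating function
  set K : ℝ := Real.sqrt s * (Real.exp (s - lam) * ρ ^ s) with hKdef
  set U : ℝ → ℝ := fun t => K * (Real.exp (-lam*t) * (1+t)^(s-1)) with hUdef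
  have hUint : IntegrableOn U (Ioi (0:ℝ)) := hintA.const_mul K
  have hUbound : ∀ t : ℝ, -1 < t →
      Real.sqrt s / (1+t) * Real.exp (-(erlY s ρ t)^2/2) = U t := by
    intro t h1t
    have h1t' : (0:ℝ) < 1 + t := by linarith
    rw [erl_exp_id hs hρ0 h1t, hUdef, hKdef]
    simp only []
    rw [Real.mul_rpow hρ0.le h1t'.le]
    have hpow : (1+t)^s = (1+t)^(s-1) * (1+t) := by
      rw [← Real.rpow_add_one h1t'.ne' (s-1)]
      norm_num
    rw [hpow, hlam, show s - s*ρ*(1+t) = (s - ρ*s) + (-(ρ*s)*t) by ring, Real.exp_add]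
    field_simp
  have hmonop : ∫ t in Ioi t₀, |erlYd s ρ t| • G (erlY s ρ t) ≤ ∫ t in Ioi t₀, U t := by
    apply setIntegral_mono_on hintp (hUint.mono_set (Ioi_subset_Ioi ht₀0.le)) measurableSet_Ioi
    intro t ht
    have ht' : t₀ < t := ht
    have h1t : (-1:ℝ) < t := by linarith
    have hw : 0 < ρ*(1+t)-1 := by
      linarith [mul_lt_mul_of_pos_left ht' hρ0, hρt₀]
    have hb := erl_bound_p hs hρ0 h1t hw
    rw [← hUbound t h1t]
    simpa [hGdef, smul_eq_mul, hcdef] using hb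
  have hmonom : ∫ t in Ioo (0:ℝ) t₀, |(-erlYd s ρ t)| • G (-erlY s ρ t)
      ≤ ∫ t in Ioo (0:ℝ) t₀, U t := by
    apply setIntegral_mono_on hintm
      (hUint.mono_set (fun x hx => hx.1)) measurableSet_Ioo
    intro t ht
    have h1t : (-1:ℝ) < t := by linarith [ht.1]
    have hw : ρ*(1+t)-1 < 0 := by
      linarith [mul_lt_mul_of_pos_left ht.2 hρ0, hρt₀]
    have hb := erl_bound_m hs hρ0 h1t hw
    rw [← hUbound t h1t]
    simpa [hGdef, smul_eq_mul, hcdef] using hb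
  -- splitting the regions
  have hGIoi : ∫ y in Ioi (-α), G y
      = (∫ y in Ioo (-α) (0:ℝ), G y) + ∫ y in Ioi (0:ℝ), G y := by
    rw [← Set.Ioc_union_Ioi_eq_Ioi (show -α ≤ (0:ℝ) by linarith),
      setIntegral_union (Set.Ioc_disjoint_Ioi le_rfl) measurableSet_Ioi
        hGint.integrableOn hGint.integrableOn,
      integral_Ioc_eq_integral_Ioo]
  have hUIoi : (∫ t in Ioo (0:ℝ) t₀, U t) + ∫ t in Ioi t₀, U t = ∫ t in Ioi (0:ℝ), U t := by
    rw [← Set.Ioc_union_Ioi_eq_Ioi ht₀0.le,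
      setIntegral_union (Set.Ioc_disjoint_Ioi le_rfl) measurableSet_Ioi
        (hUint.mono_set Ioc_subset_Ioi_self) (hUint.mono_set (Ioi_subset_Ioi ht₀0.le)),
      integral_Ioc_eq_integral_Ioo]
  have hmain : ∫ y in Ioi (-α), G y ≤ K * A := by
    rw [hGIoi, hsubp, hsubm]
    calc (∫ t in Ioo (0:ℝ) t₀, |(-erlYd s ρ t)| • G (-erlY s ρ t))
          + ∫ t in Ioi t₀, |erlYd s ρ t| • G (erlY s ρ t)
        ≤ (∫ t in Ioo (0:ℝ) t₀, U t) + ∫ t in Ioi t₀, U t := add_le_add hmonom hmonop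
      _ = ∫ t in Ioi (0:ℝ), U t := hUIoi
      _ = K * A := by rw [hUdef, hAdef]; exact integral_const_mul K _
  -- value of the Gaussian integral
  have hGval : ∫ y in Ioi (-α), G y
      = (∫ y in Iic α, Real.exp (-y^2/2)) - Real.exp (-α^2/2) * c := by
    calc ∫ y in Ioi (-α), G y
        = ∫ y in Ioi (-α), (Real.exp (-y^2/2) - (y * Real.exp (-y^2/2)) * c) := by
          apply setIntegral_congr_fun measurableSet_Ioi
          intro y _
          simp only [hGdef]
          ring
      _ = (∫ y in Ioi (-α), Real.exp (-y^2/2))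
          - (∫ y in Ioi (-α), y * Real.exp (-y^2/2)) * c := by
          rw [integral_sub gauss_integrable.integrableOn
            ((gauss_mul_integrable.mul_const c).integrableOn), integral_mul_const]
      _ = _ := by rw [int_Ioi_gauss, int_Ioi_mul_gauss]
  -- ratio of CDF and PDF
  have h2π : (0:ℝ) < Real.sqrt (2*Real.pi) := Real.sqrt_pos.2 (by positivity)
  have hratio : stdGaussianCDF α / stdGaussianPDF α
      = Real.exp (α^2/2) * ∫ y in Iic α, Real.exp (-y^2/2) := by
    unfold stdGaussianCDF stdGaussianPDF
    rw [show (∫ t in Iic α, Real.exp (-t^2/2) / Real.sqrt (2*Real.pi))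
        = (∫ t in Iic α, Real.exp (-t^2/2)) / Real.sqrt (2*Real.pi) from
      integral_div _ _]
    have hE : Real.exp (-α^2/2) = (Real.exp (α^2/2))⁻¹ := by
      rw [← Real.exp_neg]; congr 1; ring
    rw [hE]
    field_simp
  have hexpK : Real.exp (α^2/2) * K = Real.sqrt s := by
    rw [hKdef, Real.rpow_def_of_pos hρ0]
    rw [show Real.exp (α^2/2) * (Real.sqrt s * (Real.exp (s-lam)*Real.exp (Real.log ρ * s)))
        = Real.sqrt s * Real.exp (α^2/2 + (s-lam) + Real.log ρ * s) from by
      rw [Real.exp_add, Real.exp_add]; ring]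
    rw [show α^2/2 + (s-lam) + Real.log ρ * s = 0 from by rw [hαsq, hlam]; ring]
    simp
  have hexpinv : Real.exp (α^2/2) * (Real.exp (-α^2/2) * c) = c := by
    rw [← mul_assoc, ← Real.exp_add, show α^2/2 + -α^2/2 = 0 by ring, Real.exp_zero, one_mul]
  have hfin1 : stdGaussianCDF α / stdGaussianPDF α - c ≤ Real.sqrt s * A := by
    have h := hmain
    rw [hGval] at h
    have h2 := mul_le_mul_of_nonneg_left h (Real.exp_pos (α^2/2)).le
    rw [mul_sub, hexpinv, ← mul_assoc, hexpK] at h2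
    rw [hratio]
    linarith
  -- final algebra
  have hss : Real.sqrt s * Real.sqrt s = s := Real.mul_self_sqrt hs.le
  have hγpos : 0 < γ := by rw [hγ]; exact mul_pos (by linarith) hsp
  have hγeq : γ * Real.sqrt s = s - lam := by
    rw [hγ, hlam, mul_assoc, hss]; ring
  have hsA : γ * (stdGaussianCDF α / stdGaussianPDF α - c) ≤ (s - lam) * A := by
    have h := mul_le_mul_of_nonneg_left hfin1 hγpos.le
    rw [← mul_assoc, hγeq] at h
    exact h
  have hγc : γ * c = (1 - ρ)/3 := by
    rw [hγ, hcdef]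
    field_simp
  have hγs : γ * ((2/3)*(1/Real.sqrt s)) = (2/3)*(1-ρ) := by
    rw [hγ]
    field_simp
  have hbase : ρ + γ * (stdGaussianCDF α / stdGaussianPDF α + (2/3)*(1/Real.sqrt s))
      ≤ 1 + (s - lam) * A := by
    have hx : γ * (stdGaussianCDF α / stdGaussianPDF α + (2/3)*(1/Real.sqrt s))
        = γ * (stdGaussianCDF α / stdGaussianPDF α) + (2/3)*(1-ρ) := by
      rw [mul_add, hγs]
    have hy : γ * (stdGaussianCDF α / stdGaussianPDF α - c)
        = γ * (stdGaussianCDF α / stdGaussianPDF α) - (1-ρ)/3 := by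
      rw [mul_sub, hγc]
    rw [hx]
    linarith [hsA, hy]
  have hcdf : 0 ≤ stdGaussianCDF α := by
    apply setIntegral_nonneg measurableSet_Iic
    intro x _
    unfold stdGaussianPDF
    positivity
  have hpdf : 0 < stdGaussianPDF α := by
    unfold stdGaussianPDF
    positivity
  have hbasepos : 0 < ρ + γ * (stdGaussianCDF α / stdGaussianPDF α + (2/3)*(1/Real.sqrt s)) := by
    have h1 : 0 ≤ stdGaussianCDF α / stdGaussianPDF α := div_nonneg hcdf hpdf.le
    have h2 : 0 < (2:ℝ)/3 * (1/Real.sqrt s) := by positivity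
    linarith [mul_pos hγpos (by linarith : (0:ℝ) < stdGaussianCDF α / stdGaussianPDF α + (2/3)*(1/Real.sqrt s))]
  unfold erlangCExt
  have hfinal : ρ + γ * (stdGaussianCDF α / stdGaussianPDF α + (2/3)*(1/Real.sqrt s))
      ≤ lam * ∫ t in Ioi (0:ℝ), t * Real.exp (-lam * t) * (1 + t) ^ (s - 1) := by
    rw [hlamI]
    exact hbase
  exact inv_anti₀ hbasepos hfinal
end

section
/- For all reals s, λ with s > λ > 0, the three parameters γ = (s−λ)/√s, α = √(−2s(1 − ρ + ln ρ)) with ρ = λ/s, and β = (s−λ)/√λ satisfy the strict ordering γ < α < β. -/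
private lemma aux1 (x : ℝ) (hx : 0 < x) (hx1 : x < 1) :
    (1 - x)^2 / 2 < x - 1 - Real.log x := by
  set f : ℝ → ℝ := fun t => t - 1 - Real.log t - (1 - t)^2 / 2 with hf
  have hanti : StrictAntiOn f (Set.Icc x 1) := by
    apply strictAntiOn_of_deriv_neg (convex_Icc x 1)
    · apply ContinuousOn.sub
      apply ContinuousOn.sub
      · exact (continuous_id.sub continuous_const).continuousOn
      · exact Real.continuousOn_log.mono (by
          intro t ht
          exact ne_of_gt (lt_of_lt_of_le hx ht.1))
      · fun_prop
    · intro t ht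
      rw [interior_Icc] at ht
      have ht0 : 0 < t := lt_trans hx ht.1
      have hd : HasDerivAt f (1 - t⁻¹ - (2 * (1 - t)^1 * (0 - 1)) / 2) t := by
        have h1 : HasDerivAt (fun t : ℝ => t - 1) 1 t := (hasDerivAt_id t).sub_const 1
        have h2 : HasDerivAt Real.log t⁻¹ t := Real.hasDerivAt_log (ne_of_gt ht0)
        have h3 : HasDerivAt (fun t : ℝ => (1 - t)^2) (2 * (1 - t)^1 * (0 - 1)) t :=
          ((hasDerivAt_const t 1).sub (hasDerivAt_id t)).pow 2
        exact (h1.sub h2).sub (h3.div_const 2)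
      rw [hd.deriv]
      have : 1 - t⁻¹ - (2 * (1 - t)^1 * (0 - 1)) / 2 = -((1 - t)^2 / t) := by
        field_simp; ring
      rw [this]
      · have h1t : (1 - t) ≠ 0 := by intro h; nlinarith [ht.2]
        have : 0 < (1 - t)^2 / t := div_pos (pow_pos (by nlinarith [ht.2]) 2) ht0
        linarith
  have key : f 1 < f x := by
    apply hanti (Set.mem_Icc.mpr ⟨le_refl x, le_of_lt hx1⟩)
      (Set.mem_Icc.mpr ⟨le_of_lt hx1, le_refl 1⟩) hx1
  simp [hf, Real.log_one] at key
  linarith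

private lemma aux2 (x : ℝ) (hx : 0 < x) (hx1 : x < 1) :
    x - 1 - Real.log x < (1 - x)^2 / (2 * x) := by
  set h : ℝ → ℝ := fun t => 1 / (2 * t) - t / 2 + Real.log t with hh
  have hanti : StrictAntiOn h (Set.Icc x 1) := by
    apply strictAntiOn_of_deriv_neg (convex_Icc x 1)
    · apply ContinuousOn.add
      apply ContinuousOn.sub
      · apply ContinuousOn.div continuousOn_const (by fun_prop)
        intro t ht
        have : 0 < t := lt_of_lt_of_le hx ht.1
        positivity
      · fun_prop
      · exact Real.continuousOn_log.mono (by
          intro t ht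
          exact ne_of_gt (lt_of_lt_of_le hx ht.1))
    · intro t ht
      rw [interior_Icc] at ht
      have ht0 : 0 < t := lt_trans hx ht.1
      have hd : HasDerivAt h ((0 * (2*t) - 1 * 2) / (2*t)^2 - 1/2 + t⁻¹) t := by
        have h1 : HasDerivAt (fun t : ℝ => 1 / (2 * t)) ((0 * (2*t) - 1 * 2) / (2*t)^2) t := by
          have := (((hasDerivAt_id t).const_mul (2:ℝ)).inv (by positivity : (2:ℝ) * t ≠ 0))
          have e1 : (fun t : ℝ => 1 / (2 * t)) = (fun y : ℝ => 2 * id y)⁻¹ := by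
            funext y
            show 1 / (2 * y) = (2 * y)⁻¹
            rw [one_div]
          have e2 : (0 * (2*t) - 1 * 2) / (2*t)^2 = -(2 * 1) / (2 * id t) ^ 2 := by
            show _ = -(2 * 1) / (2 * t) ^ 2
            ring
          rw [e1, e2]
          exact this
        have h2 : HasDerivAt (fun t : ℝ => t / 2) (1/2) t := by
          simpa using (hasDerivAt_id t).div_const 2
        have h3 : HasDerivAt Real.log t⁻¹ t := Real.hasDerivAt_log (ne_of_gt ht0)
        exact (h1.sub h2).add h3
      rw [hd.deriv]
      have heq : (0 * (2*t) - 1 * 2) / (2*t)^2 - 1/2 + t⁻¹ = -((1 - t)^2 / (2 * t^2)) := by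
        field_simp; ring
      rw [heq]
      have h1t : 0 < (1 - t) := by nlinarith [ht.2]
      have : 0 < (1 - t)^2 / (2 * t^2) := div_pos (pow_pos h1t 2) (by positivity)
      linarith
  have key : h 1 < h x := by
    apply hanti (Set.mem_Icc.mpr ⟨le_refl x, le_of_lt hx1⟩)
      (Set.mem_Icc.mpr ⟨le_of_lt hx1, le_refl 1⟩) hx1
  simp [hh, Real.log_one] at key
  have h2x : (0:ℝ) < 2 * x := by linarith
  have key' : (0:ℝ) < 1 / (2 * x) - x / 2 + Real.log x := by
    rw [one_div, mul_inv]; linarith [key]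
  have key2 : (0:ℝ) < (2 * x) * (1 / (2 * x) - x / 2 + Real.log x) := mul_pos h2x key'
  have keq : (2 * x) * (1 / (2 * x) - x / 2 + Real.log x)
      = 1 - x^2 + 2 * x * Real.log x := by field_simp
  rw [keq] at key2
  rw [lt_div_iff₀ h2x]
  nlinarith [key2]

/-- The ordering `γ < α < β` of the three QED parameters
`γ = (s−λ)/√s`, `α = √(−2s(1 − ρ + ln ρ))` with `ρ = λ/s`, and `β = (s−λ)/√λ`. -/
theorem qed_parameters_strict_ordering (s lam : ℝ) (h0 : 0 < lam) (hlt : lam < s)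
    (ρ α β γ : ℝ) (hρ : ρ = lam / s)
    (hα : α = Real.sqrt (-2 * s * (1 - ρ + Real.log ρ)))
    (hβ : β = (s - lam) / Real.sqrt lam)
    (hγ : γ = (s - lam) / Real.sqrt s) :
    γ < α ∧ α < β := by
  have hs : 0 < s := lt_trans h0 hlt
  have hρ0 : 0 < ρ := by rw [hρ]; positivity
  have hρ1 : ρ < 1 := by rw [hρ]; exact (div_lt_one hs).mpr hlt
  have hlam : lam = ρ * s := by rw [hρ]; field_simp
  set L := Real.log ρ with hL
  have k1 := aux1 ρ hρ0 hρ1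
  have k2 := aux2 ρ hρ0 hρ1
  -- squared quantities
  have hγeq : γ = Real.sqrt ((s - lam)^2 / s) := by
    rw [hγ, Real.sqrt_div (sq_nonneg _), Real.sqrt_sq (by linarith)]
  have hβeq : β = Real.sqrt ((s - lam)^2 / lam) := by
    rw [hβ, Real.sqrt_div (sq_nonneg _), Real.sqrt_sq (by linarith)]
  have e1 : (s - lam)^2 / s = s * (1 - ρ)^2 := by
    rw [hlam]; field_simp
  have e2 : (s - lam)^2 / lam = s * (1 - ρ)^2 / ρ := by
    rw [hlam]; field_simp
  have ineq1 : (s - lam)^2 / s < -2 * s * (1 - ρ + L) := by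
    rw [e1]; nlinarith [mul_lt_mul_of_pos_left k1 (show (0:ℝ) < 2 * s by linarith)]
  have ineq2 : -2 * s * (1 - ρ + L) < (s - lam)^2 / lam := by
    rw [e2]
    have k2' : (ρ - 1 - L) * (2 * ρ) < (1 - ρ)^2 :=
      (lt_div_iff₀ (by linarith : (0:ℝ) < 2 * ρ)).mp k2
    rw [lt_div_iff₀ hρ0]
    nlinarith [mul_lt_mul_of_pos_left k2' (show (0:ℝ) < s by linarith)]
  constructor
  · rw [hγeq, hα]
    exact Real.sqrt_lt_sqrt (div_nonneg (sq_nonneg _) (le_of_lt hs)) ineq1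
  · rw [hα, hβeq]
    exact Real.sqrt_lt_sqrt (by nlinarith [div_nonneg (sq_nonneg (s-lam)) (le_of_lt hs)]) ineq2
end

section
/- (D'Auria) For every λ > 0 and every β > 0, setting s = λ + β√λ, the extended Erlang C formula satisfies C(s, λ) ≥ g(β), where g(β) = (1 + β·Φ(β)/φ(β))^{−1} is the Halfin–Whitt delay function. -/
open MeasureTheory

/-- The Halfin–Whitt delay function. -/
noncomputable def halfinWhittG (β : ℝ) : ℝ :=
  (1 + β * stdGaussianCDF β / stdGaussianPDF β)⁻¹

open Real Set Filter

lemma tendsto_aux (p c : ℝ) (hc : 0 < c) :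
    Tendsto (fun t : ℝ => (1 + t) ^ p * Real.exp (-c * t)) atTop (nhds 0) := by
  have h1 : Tendsto (fun y : ℝ => y ^ p * Real.exp (-c * y) * Real.exp c) atTop (nhds 0) := by
    simpa using (tendsto_rpow_mul_exp_neg_mul_atTop_nhds_zero p c hc).mul_const (Real.exp c)
  have h2 : Tendsto (fun t : ℝ => (1 : ℝ) + t) atTop atTop :=
    tendsto_atTop_add_const_left _ 1 tendsto_id
  refine (h1.comp h2).congr fun t => ?_
  simp only [Function.comp]
  rw [mul_assoc, ← Real.exp_add]
  ring_nf

lemma isBigO_helper {f : ℝ → ℝ} {c : ℝ}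
    (h : Tendsto (fun t => f t * Real.exp (c * t)) atTop (nhds 0)) :
    f =O[atTop] fun t => Real.exp (-c * t) := by
  have hev : ∀ᶠ t in atTop, |f t * Real.exp (c * t)| < 1 := by
    have := Metric.tendsto_nhds.mp h 1 one_pos
    simpa [Real.dist_eq, abs_mul, Real.abs_exp] using this
  refine Asymptotics.IsBigO.of_bound 1 ?_
  filter_upwards [hev] with t ht
  have hpos := Real.exp_pos (c * t)
  rw [abs_mul, Real.abs_exp] at ht
  rw [Real.norm_eq_abs, Real.norm_eq_abs, Real.abs_exp, one_mul, neg_mul, Real.exp_neg _]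
  nlinarith [mul_pos (sub_pos.mpr ht) (inv_pos.mpr hpos), mul_inv_cancel₀ hpos.ne',
    abs_nonneg (f t)]

lemma contOn_pow_exp (p c : ℝ) :
    ContinuousOn (fun t : ℝ => Real.exp (-c * t) * (1 + t) ^ p) (Ici 0) := by
  apply ContinuousOn.mul
  · exact (Real.continuous_exp.comp (continuous_const.mul continuous_id)).continuousOn
  · exact ContinuousOn.rpow_const (continuousOn_const.add continuousOn_id)
      (fun x hx => Or.inl (by simp at hx; positivity))

lemma integrableOn_pow_exp (p c : ℝ) (hc : 0 < c) :
    IntegrableOn (fun t : ℝ => Real.exp (-c * t) * (1 + t) ^ p) (Ioi 0) := by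
  refine integrable_of_isBigO_exp_neg (half_pos hc) (contOn_pow_exp p c) (isBigO_helper ?_)
  have := tendsto_aux p (c / 2) (half_pos hc)
  refine this.congr fun t => ?_
  rw [show Real.exp (-(c / 2) * t) = Real.exp (-c * t) * Real.exp (c / 2 * t) by
    rw [← Real.exp_add]; ring_nf]
  ring

lemma integrableOn_mul_pow_exp (p c : ℝ) (hc : 0 < c) :
    IntegrableOn (fun t : ℝ => t * Real.exp (-c * t) * (1 + t) ^ p) (Ioi 0) := by
  have hcont : ContinuousOn (fun t : ℝ => t * Real.exp (-c * t) * (1 + t) ^ p) (Ici 0) := by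
    have := continuousOn_id.mul (contOn_pow_exp p c)
    refine this.congr fun x hx => ?_
    simp only [Pi.mul_apply, id]; ring
  refine integrable_of_isBigO_exp_neg (half_pos hc) hcont (isBigO_helper ?_)
  · -- tendsto (t * exp(-ct)(1+t)^p * exp(ct/2)) → 0
    have key : Tendsto (fun t : ℝ => (1 + t) ^ (p + 1) * Real.exp (-(c / 2) * t)) atTop
        (nhds 0) := tendsto_aux (p + 1) (c / 2) (half_pos hc)
    apply squeeze_zero' (g := fun t => (1 + t) ^ (p + 1) * Real.exp (-(c / 2) * t))
    · filter_upwards [Ioi_mem_atTop (0 : ℝ)] with t ht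
      have ht0 : (0:ℝ) < t := ht
      have h1 : (0:ℝ) < 1 + t := by linarith
      positivity
    · filter_upwards [Ioi_mem_atTop (0 : ℝ)] with t ht
      have ht0 : (0:ℝ) ≤ t := le_of_lt ht
      have h1 : (0:ℝ) < 1 + t := by linarith
      have hsplit : (1 + t) ^ (p + 1) = (1 + t) ^ p * (1 + t) := by
        rw [Real.rpow_add h1, Real.rpow_one]
      have hexp : Real.exp (-c * t) * Real.exp (c / 2 * t) = Real.exp (-(c / 2) * t) := by
        rw [← Real.exp_add]; ring_nf
      calc t * Real.exp (-c * t) * (1 + t) ^ p * Real.exp (c / 2 * t)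
          = t * (1 + t) ^ p * (Real.exp (-c * t) * Real.exp (c / 2 * t)) := by ring
        _ = t * (1 + t) ^ p * Real.exp (-(c / 2) * t) := by rw [hexp]
        _ ≤ (1 + t) * (1 + t) ^ p * Real.exp (-(c / 2) * t) := by
            have : (0:ℝ) ≤ (1 + t) ^ p := le_of_lt (Real.rpow_pos_of_pos h1 p)
            have : t * (1 + t) ^ p ≤ (1 + t) * (1 + t) ^ p := by nlinarith
            nlinarith [Real.exp_pos (-(c / 2) * t)]
        _ = (1 + t) ^ (p + 1) * Real.exp (-(c / 2) * t) := by rw [hsplit]; ring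
    · exact key

lemma quad_le_exp {x : ℝ} (hx : 0 ≤ x) : 1 + x + x ^ 2 / 2 ≤ Real.exp x := by
  have h := Real.sum_le_exp_of_nonneg hx 3
  simp [Finset.sum_range_succ] at h
  nlinarith [h]

lemma log_ineq_s18 {t : ℝ} (ht : 0 ≤ t) :
    Real.log (1 + t) + (Real.log (1 + t)) ^ 2 / 2 ≤ t := by
  set L := Real.log (1 + t) with hL
  have hL0 : 0 ≤ L := Real.log_nonneg (by linarith)
  have hexp : Real.exp L = 1 + t := Real.exp_log (by linarith)
  have := quad_le_exp hL0
  nlinarith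

lemma step2 {lam b t : ℝ} (hlam : 0 < lam) (ht : 0 < t) :
    Real.exp (-lam * t) * (1 + t) ^ (lam + b - 1)
      ≤ Real.exp (-lam * Real.log (1 + t) ^ 2 / 2) * (1 + t) ^ (b - 1) := by
  have h1 : (0:ℝ) < 1 + t := by linarith
  set L := Real.log (1 + t) with hLdef
  have hL : L + L ^ 2 / 2 ≤ t := log_ineq_s18 ht.le
  have hsplit : (1 + t) ^ (lam + b - 1) = (1 + t) ^ lam * (1 + t) ^ (b - 1) := by
    rw [← Real.rpow_add h1]; ring_nf
  have hlpow : (1 + t) ^ lam = Real.exp (L * lam) := by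
    rw [Real.rpow_def_of_pos h1]
  rw [hsplit, hlpow, ← mul_assoc, ← Real.exp_add]
  have hP : (0:ℝ) ≤ (1 + t) ^ (b - 1) := (Real.rpow_pos_of_pos h1 _).le
  refine mul_le_mul_of_nonneg_right (Real.exp_le_exp.2 ?_) hP
  nlinarith

lemma step1 (lam β : ℝ) (hlam : 0 < lam) (hβ : 0 < β) :
    lam * ∫ t in Ioi (0:ℝ), t * Real.exp (-lam * t) * (1 + t) ^ (lam + β * Real.sqrt lam - 1)
      = 1 + β * Real.sqrt lam *
        ∫ t in Ioi (0:ℝ), Real.exp (-lam * t) * (1 + t) ^ (lam + β * Real.sqrt lam - 1) := by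
  set a := Real.sqrt lam with ha
  set s := lam + β * a with hs
  set F := fun t : ℝ => -(Real.exp (-lam * t) * (1 + t) ^ s) with hF
  have hderiv : ∀ x ∈ Ici (0:ℝ), HasDerivAt F
      (lam * (x * Real.exp (-lam * x) * (1 + x) ^ (s - 1))
        - β * a * (Real.exp (-lam * x) * (1 + x) ^ (s - 1))) x := by
    intro x hx
    have hx1 : (0:ℝ) < 1 + x := by simp at hx; linarith
    have h1 : HasDerivAt (fun t : ℝ => Real.exp (-lam * t))
        (Real.exp (-lam * x) * (-lam * 1)) x :=
      ((hasDerivAt_id x).const_mul (-lam)).exp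
    have h2 : HasDerivAt (fun t : ℝ => (1 + t) ^ s) (s * (1 + x) ^ (s - 1) * 1) x := by
      have := ((hasDerivAt_id x).const_add 1).rpow_const (p := s) (Or.inl (by simpa using hx1.ne'))
      simpa [mul_comm] using this
    have h3 := (h1.mul h2).neg
    refine h3.congr_deriv ?_
    have hpow : (1 + x) ^ s = (1 + x) ^ (s - 1) * (1 + x) := by
      rw [← Real.rpow_add_one hx1.ne' (s - 1), sub_add_cancel]
    rw [hpow, hs]
    generalize (1 + x) ^ (s - 1) = P
    generalize Real.exp (-lam * x) = E
    ring
  have htend : Tendsto F atTop (nhds 0) := by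
    have := (tendsto_aux s lam hlam).neg
    rw [neg_zero] at this
    exact this.congr fun t => by rw [hF]; ring_nf
  have hint1 := integrableOn_mul_pow_exp (s - 1) lam hlam
  have hint2 := integrableOn_pow_exp (s - 1) lam hlam
  have hintD : IntegrableOn (fun x : ℝ =>
      lam * (x * Real.exp (-lam * x) * (1 + x) ^ (s - 1))
        - β * a * (Real.exp (-lam * x) * (1 + x) ^ (s - 1))) (Ioi 0) :=
    (hint1.const_mul lam).sub (hint2.const_mul (β * a))
  have hftc := integral_Ioi_of_hasDerivAt_of_tendsto' hderiv hintD htend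
  have hF0 : F 0 = -1 := by simp [hF]
  rw [hF0] at hftc
  rw [integral_sub (hint1.const_mul lam) (hint2.const_mul (β * a)),
    integral_const_mul, integral_const_mul] at hftc
  linarith [hftc]

lemma exp_image : (fun x : ℝ => Real.exp x - 1) '' Ioi 0 = Ioi 0 := by
  ext y
  simp only [mem_image, mem_Ioi]
  constructor
  · rintro ⟨x, hx, rfl⟩
    have : (1:ℝ) < Real.exp x := by
      have := Real.exp_lt_exp.2 hx
      simpa using this
    linarith
  · intro hy
    exact ⟨Real.log (1 + y), Real.log_pos (by linarith),
      by rw [Real.exp_log (by linarith)]; ring⟩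

lemma exp_smul_eq (c p : ℝ) (x : ℝ) :
    |Real.exp x| • ((fun t : ℝ => Real.exp (-c * Real.log (1 + t) ^ 2 / 2)
      * (1 + t) ^ (p - 1)) (Real.exp x - 1)) = Real.exp (-c * x ^ 2 / 2 + p * x) := by
  have h1 : (1:ℝ) + (Real.exp x - 1) = Real.exp x := by ring
  rw [smul_eq_mul, abs_of_pos (Real.exp_pos x)]
  dsimp only
  rw [h1, Real.log_exp,
    Real.rpow_def_of_pos (Real.exp_pos x), Real.log_exp, ← Real.exp_add, ← Real.exp_add]
  ring_nf

lemma subst_exp (c p : ℝ) :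
    ∫ t in Ioi (0:ℝ), Real.exp (-c * Real.log (1 + t) ^ 2 / 2) * (1 + t) ^ (p - 1)
      = ∫ x in Ioi (0:ℝ), Real.exp (-c * x ^ 2 / 2 + p * x) := by
  have hder : ∀ x ∈ Ioi (0:ℝ), HasDerivWithinAt (fun x : ℝ => Real.exp x - 1)
      (Real.exp x) (Ioi 0) x :=
    fun x _ => ((Real.hasDerivAt_exp x).sub_const 1).hasDerivWithinAt
  have hinj : InjOn (fun x : ℝ => Real.exp x - 1) (Ioi 0) :=
    fun u _ v _ h => Real.exp_injective (by dsimp at h; linarith)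
  have := integral_image_eq_integral_abs_deriv_smul measurableSet_Ioi hder hinj
    (fun t : ℝ => Real.exp (-c * Real.log (1 + t) ^ 2 / 2) * (1 + t) ^ (p - 1))
  rw [exp_image] at this
  rw [this]
  exact setIntegral_congr_fun measurableSet_Ioi fun x _ => exp_smul_eq c p x

lemma subst_int_iff (c p : ℝ) :
    IntegrableOn (fun t : ℝ => Real.exp (-c * Real.log (1 + t) ^ 2 / 2) * (1 + t) ^ (p - 1))
      (Ioi 0) ↔
    IntegrableOn (fun x : ℝ => Real.exp (-c * x ^ 2 / 2 + p * x)) (Ioi 0) := by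
  have hder : ∀ x ∈ Ioi (0:ℝ), HasDerivWithinAt (fun x : ℝ => Real.exp x - 1)
      (Real.exp x) (Ioi 0) x :=
    fun x _ => ((Real.hasDerivAt_exp x).sub_const 1).hasDerivWithinAt
  have hinj : InjOn (fun x : ℝ => Real.exp x - 1) (Ioi 0) :=
    fun u _ v _ h => Real.exp_injective (by dsimp at h; linarith)
  have := integrableOn_image_iff_integrableOn_abs_deriv_smul measurableSet_Ioi hder hinj
    (fun t : ℝ => Real.exp (-c * Real.log (1 + t) ^ 2 / 2) * (1 + t) ^ (p - 1))
  rw [exp_image] at this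
  rw [this]
  constructor <;> intro h <;> [skip; skip] <;>
    · refine h.congr_fun (fun x _ => ?_) measurableSet_Ioi
      first
        | exact (exp_smul_eq c p x)
        | exact (exp_smul_eq c p x).symm

lemma affine_image {a β : ℝ} (ha : 0 < a) : (fun x : ℝ => β - a * x) '' Ioi 0 = Iio β := by
  ext y
  simp only [mem_image, mem_Ioi, mem_Iio]
  constructor
  · rintro ⟨x, hx, rfl⟩; nlinarith
  · intro hy
    exact ⟨(β - y) / a, div_pos (by linarith) ha, by field_simp; ring⟩

lemma subst_affine {a β : ℝ} (ha : 0 < a) :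
    ∫ y in Iio β, Real.exp (-y ^ 2 / 2)
      = a * ∫ x in Ioi (0:ℝ), Real.exp (-(β - a * x) ^ 2 / 2) := by
  have hder : ∀ x ∈ Ioi (0:ℝ), HasDerivWithinAt (fun x : ℝ => β - a * x) (-a) (Ioi 0) x :=
    fun x _ => by simpa using (((hasDerivAt_id x).const_mul a).const_sub β).hasDerivWithinAt
  have hinj : InjOn (fun x : ℝ => β - a * x) (Ioi 0) := fun u _ v _ h => by
    dsimp at h
    have : a * u = a * v := by linarith
    exact mul_left_cancel₀ ha.ne' this
  have := integral_image_eq_integral_abs_deriv_smul measurableSet_Ioi hder hinj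
    (fun y : ℝ => Real.exp (-y ^ 2 / 2))
  rw [affine_image ha] at this
  rw [this, ← integral_const_mul]
  refine setIntegral_congr_fun measurableSet_Ioi fun x _ => ?_
  rw [smul_eq_mul, abs_of_neg (neg_neg_iff_pos.mpr ha)]
  ring_nf

lemma gauss_integrable_s18 {a β : ℝ} (ha : 0 < a) :
    IntegrableOn (fun x : ℝ => Real.exp (-(a ^ 2) * x ^ 2 / 2 + β * a * x)) (Ioi 0) := by
  have h1 : Integrable (fun y : ℝ => Real.exp (-(1/2) * y ^ 2)) := by
    exact integrable_exp_neg_mul_sq (by norm_num)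
  have h2 : Integrable (fun y : ℝ => Real.exp (-(1/2) * (y - β) ^ 2)) := h1.comp_sub_right β
  have h3 : Integrable (fun x : ℝ => Real.exp (-(1/2) * (a * x - β) ^ 2)) :=
    h2.comp_mul_left' ha.ne'
  have h4 : Integrable (fun x : ℝ => Real.exp (β ^ 2 / 2)
      * Real.exp (-(1/2) * (a * x - β) ^ 2)) := h3.const_mul _
  refine (h4.integrableOn).congr_fun (fun x _ => ?_) measurableSet_Ioi
  dsimp only
  rw [← Real.exp_add]
  ring_nf

/-- D'Auria's bound: the Erlang C delay probability under the square-root rule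
`s = λ + β√λ` is at least the Halfin–Whitt limit `g(β)`. -/
theorem erlangCExt_ge_halfinWhittG (lam β : ℝ) (hlam : 0 < lam) (hβ : 0 < β) :
    halfinWhittG β ≤ erlangCExt (lam + β * Real.sqrt lam) lam := by
  have ha0 : 0 < Real.sqrt lam := Real.sqrt_pos.mpr hlam
  have ha2 : Real.sqrt lam ^ 2 = lam := Real.sq_sqrt hlam.le
  rw [halfinWhittG, erlangCExt]
  set a := Real.sqrt lam with ha
  set K := ∫ t in Ioi (0:ℝ), t * Real.exp (-lam * t) * (1 + t) ^ (lam + β * a - 1) with hK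
  set J := ∫ t in Ioi (0:ℝ), Real.exp (-lam * t) * (1 + t) ^ (lam + β * a - 1) with hJdef
  have hstep1 : lam * K = 1 + β * a * J := step1 lam β hlam hβ
  have hJ0 : 0 ≤ J := setIntegral_nonneg measurableSet_Ioi (fun t ht => by
    have h1 : (0:ℝ) < 1 + t := by have : (0:ℝ) < t := ht; linarith
    positivity)
  have hint2 := integrableOn_pow_exp (lam + β * a - 1) lam hlam
  have hintW : IntegrableOn (fun x : ℝ => Real.exp (-lam * x ^ 2 / 2 + β * a * x)) (Ioi 0) := by
    have := gauss_integrable_s18 (a := a) (β := β) ha0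
    rw [ha2] at this
    exact this
  have hintG : IntegrableOn (fun t : ℝ =>
      Real.exp (-lam * Real.log (1 + t) ^ 2 / 2) * (1 + t) ^ (β * a - 1)) (Ioi 0) :=
    (subst_int_iff lam (β * a)).mpr hintW
  have hJG : J ≤ ∫ t in Ioi (0:ℝ),
      Real.exp (-lam * Real.log (1 + t) ^ 2 / 2) * (1 + t) ^ (β * a - 1) := by
    refine setIntegral_mono_on hint2 hintG measurableSet_Ioi (fun t ht => ?_)
    have : (0:ℝ) < t := ht
    have h := step2 (b := β * a) hlam this
    convert h using 3 <;> ring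
  have hGW := subst_exp lam (β * a)
  have hWval : (∫ x in Ioi (0:ℝ), Real.exp (-lam * x ^ 2 / 2 + β * a * x))
      = a⁻¹ * Real.exp (β ^ 2 / 2) * ∫ y in Iic β, Real.exp (-y ^ 2 / 2) := by
    have hsub := subst_affine (a := a) (β := β) ha0
    have hcongr : (∫ x in Ioi (0:ℝ), Real.exp (-lam * x ^ 2 / 2 + β * a * x))
        = Real.exp (β ^ 2 / 2) * ∫ x in Ioi (0:ℝ), Real.exp (-(β - a * x) ^ 2 / 2) := by
      rw [← integral_const_mul]
      refine setIntegral_congr_fun measurableSet_Ioi fun x _ => ?_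
      rw [← Real.exp_add]
      congr 1
      rw [← ha2]
      ring
    rw [hcongr, integral_Iic_eq_integral_Iio, hsub]
    field_simp
  have hsqrtpos : 0 < Real.sqrt (2 * Real.pi) := Real.sqrt_pos.mpr (by positivity)
  have hpdfpos : 0 < stdGaussianPDF β := by rw [stdGaussianPDF]; positivity
  have hcdf : stdGaussianCDF β
      = (∫ y in Iic β, Real.exp (-y ^ 2 / 2)) / Real.sqrt (2 * Real.pi) := by
    rw [stdGaussianCDF]
    unfold stdGaussianPDF
    rw [integral_div]
  have hratio : stdGaussianCDF β / stdGaussianPDF β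
      = Real.exp (β ^ 2 / 2) * ∫ y in Iic β, Real.exp (-y ^ 2 / 2) := by
    rw [hcdf, stdGaussianPDF, div_div_div_cancel_right₀]
    · rw [div_eq_mul_inv, ← Real.exp_neg, mul_comm]
      norm_num
      left
      ring
    · exact hsqrtpos.ne'
  have hchain : lam * K ≤ 1 + β * stdGaussianCDF β / stdGaussianPDF β := by
    rw [hstep1]
    have h1 : β * a * J ≤ β * a *
        (a⁻¹ * Real.exp (β ^ 2 / 2) * ∫ y in Iic β, Real.exp (-y ^ 2 / 2)) := by
      refine mul_le_mul_of_nonneg_left ?_ (by positivity)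
      rw [← hWval, ← hGW]
      exact hJG
    have h2 : β * a * (a⁻¹ * Real.exp (β ^ 2 / 2) * ∫ y in Iic β, Real.exp (-y ^ 2 / 2))
        = β * stdGaussianCDF β / stdGaussianPDF β := by
      rw [mul_div_assoc, hratio]
      field_simp
    linarith
  have hpos : 0 < lam * K := by
    rw [hstep1]
    nlinarith [mul_nonneg (mul_nonneg hβ.le ha0.le) hJ0]
  exact inv_anti₀ hpos hchain
end
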